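/- arXiv:1401.7911 — 6 statements merged into one kernel-verified Lean document; each statement's English description precedes it below -/
import Mathlib

section
/- Let n ≥ 3, let u,v ∈ C^n([a,b]) be such that dim P^n_{u,v}([a,b]) = n and such that condition (C1) holds. Then there exist unique functions U_{0,1,n-1} and U_{1,1,n-1} in span⟨u^{(n-2)}, v^{(n-2)}⟩ satisfying U_{0,1,n-1}(a)=1, U_{0,1,n-1}(b)=0, U_{1,1,n-1}(a)=0, U_{1,1,n-1}(b)=1, and moreover U_{0,1,n-1}(s) > 0 and U_{1,1,n-1}(s) > 0 for all s ∈ (a,b). -/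
open Set

noncomputable section

/-- Iterated derivative within the interval `[a, b]`. -/
def dW (a b : ℝ) (k : ℕ) (f : ℝ → ℝ) : ℝ → ℝ :=
  iteratedDerivWithin k f (Set.Icc a b)

/-- Generating set `{1, s, ..., s^(n-3), u, v}` of the space `P^n_{u,v}`. -/
def genSet (n : ℕ) (u v : ℝ → ℝ) : Set (ℝ → ℝ) :=
  insert u (insert v {f : ℝ → ℝ | ∃ i : ℕ, i + 3 ≤ n ∧ f = fun s : ℝ => s ^ i})

/-- The space `P^n_{u,v}` as a subspace of `ℝ → ℝ`. -/
def Pspace (n : ℕ) (u v : ℝ → ℝ) : Submodule ℝ (ℝ → ℝ) :=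
  Submodule.span ℝ (genSet n u v)

/-- Restriction of functions to `[a, b]`, as a linear map. -/
def restrictMap (a b : ℝ) : (ℝ → ℝ) →ₗ[ℝ] (Set.Icc a b → ℝ) :=
  LinearMap.funLeft ℝ ℝ Subtype.val

/-- The dimension of `P^n_{u,v}([a,b])`, i.e. of the space of restrictions to `[a,b]`. -/
def dimP (n : ℕ) (u v : ℝ → ℝ) (a b : ℝ) : ℕ :=
  Module.finrank ℝ ((Pspace n u v).map (restrictMap a b))

/-- Condition (C1): if the `(n-2)`-th derivative of an element of `P^n_{u,v}([a,b])`
vanishes at two distinct points of `[a,b]`, it vanishes identically on `[a,b]`. -/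
def CondC1 (n : ℕ) (u v : ℝ → ℝ) (a b : ℝ) : Prop :=
  ∀ ψ ∈ Pspace n u v, ∀ s₁ ∈ Set.Icc a b, ∀ s₂ ∈ Set.Icc a b, s₁ ≠ s₂ →
    dW a b (n - 2) ψ s₁ = 0 → dW a b (n - 2) ψ s₂ = 0 →
      ∀ s ∈ Set.Icc a b, dW a b (n - 2) ψ s = 0

/-- Condition (C2): if the `(n-2)`-th and `(n-1)`-th derivatives of an element of
`P^n_{u,v}([a,b])` vanish at a common interior point, the `(n-2)`-th derivative
vanishes identically on `[a,b]`. -/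
def CondC2 (n : ℕ) (u v : ℝ → ℝ) (a b : ℝ) : Prop :=
  ∀ ψ ∈ Pspace n u v, ∀ s₁ ∈ Set.Ioo a b,
    dW a b (n - 2) ψ s₁ = 0 → dW a b (n - 1) ψ s₁ = 0 →
      ∀ s ∈ Set.Icc a b, dW a b (n - 2) ψ s = 0

section Aux
open Filter Nat

lemma itDW_congr_set {f : ℝ → ℝ} {s t : Set ℝ} {x : ℝ} (h : s =ᶠ[nhds x] t) (k : ℕ) :
    iteratedDerivWithin k f s x = iteratedDerivWithin k f t x := by
  simp only [iteratedDerivWithin, iteratedFDerivWithin_congr_set h]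

lemma evset {a b x : ℝ} (hax : a < x) (hxb : x ≤ b) : Icc a x =ᶠ[nhds a] Icc a b := by
  rw [Filter.eventuallyEq_set]
  filter_upwards [Iio_mem_nhds hax, Iio_mem_nhds (lt_of_lt_of_le hax hxb)] with y h1 h2
  simp only [mem_Icc]
  exact ⟨fun h => ⟨h.1, h2.le⟩, fun h => ⟨h.1, h1.le⟩⟩

lemma evset' {a b x y : ℝ} (hy : y ∈ Ioo a x) (hxb : x ≤ b) : Icc a x =ᶠ[nhds y] Icc a b := by
  rw [Filter.eventuallyEq_set]
  filter_upwards [isOpen_Ioo.mem_nhds hy] with z hz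
  simp only [mem_Icc]
  constructor
  · rintro ⟨h1, _⟩; exact ⟨h1, hz.2.le.trans hxb⟩
  · rintro ⟨h1, _⟩; exact ⟨h1, hz.2.le⟩

lemma polyA {a b : ℝ} {k : ℕ} (hk : 1 ≤ k) {f : ℝ → ℝ}
    (hf : ContDiffOn ℝ k f (Icc a b))
    (h0 : ∀ s ∈ Icc a b, iteratedDerivWithin k f (Icc a b) s = 0) :
    ∀ x ∈ Icc a b, f x = ∑ j ∈ Finset.range k,
      ((j ! : ℝ)⁻¹ * iteratedDerivWithin j f (Icc a b) a) * (x - a) ^ j := by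
  intro x hx
  rcases eq_or_lt_of_le hx.1 with rfl | hax
  · rw [Finset.sum_eq_single 0]
    · simp
    · intro j _ hj
      simp [sub_self, zero_pow hj]
    · intro h; exact absurd (Finset.mem_range.2 hk) h
  · obtain ⟨m, rfl⟩ : ∃ m, k = m + 1 := ⟨k - 1, by omega⟩
    have hsub : Icc a x ⊆ Icc a b := Icc_subset_Icc le_rfl hx.2
    have hfx : ContDiffOn ℝ (m + 1) f (Icc a x) := hf.mono hsub
    have hf' : DifferentiableOn ℝ (iteratedDerivWithin m f (Icc a x)) (Ioo a x) :=
      (hfx.differentiableOn_iteratedDerivWithin (by exact_mod_cast Nat.lt_succ_self m)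
        (uniqueDiffOn_Icc hax)).mono Ioo_subset_Icc_self
    obtain ⟨x', hx', hTay⟩ := taylor_mean_remainder_lagrange hax.ne
      (by rw [uIcc_of_le hax.le]; exact hfx.of_le (by exact_mod_cast Nat.le_succ m))
      (by rw [uIcc_of_le hax.le, uIoo_of_le hax.le]; exact hf')
    rw [uIoo_of_le hax.le] at hx'
    rw [uIcc_of_le hax.le] at hTay
    have hzero : iteratedDerivWithin (m + 1) f (Icc a x) x' = 0 := by
      rw [itDW_congr_set (evset' hx' hx.2) _]
      exact h0 x' ⟨hx'.1.le, hx'.2.le.trans hx.2⟩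
    rw [hzero] at hTay
    have hfx' : f x = taylorWithinEval f m (Icc a x) a x := by
      have : f x - taylorWithinEval f m (Icc a x) a x = 0 := by rw [hTay]; ring
      linarith
    rw [hfx', taylor_within_apply]
    refine Finset.sum_congr rfl fun j _ => ?_
    rw [itDW_congr_set (evset hax hx.2) j]
    simp [smul_eq_mul]; ring

def monoSet (n : ℕ) : Set (ℝ → ℝ) := {f : ℝ → ℝ | ∃ i : ℕ, i + 3 ≤ n ∧ f = fun s : ℝ => s ^ i}

lemma mono_mem {n : ℕ} {a b : ℝ} {j : ℕ} (hj : j + 3 ≤ n) :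
    restrictMap a b (fun x => (x - a) ^ j) ∈
      Submodule.span ℝ (restrictMap a b '' monoSet n) := by
  have hexp : (fun x : ℝ => (x - a) ^ j) =
      ∑ m ∈ Finset.range (j + 1),
        ((-1 : ℝ) ^ (m + j) * a ^ (j - m) * (j.choose m : ℝ)) • (fun x : ℝ => x ^ m) := by
    funext x
    rw [Finset.sum_apply, sub_pow]
    refine Finset.sum_congr rfl fun m _ => ?_
    simp [smul_eq_mul]; ring
  rw [hexp, map_sum]
  refine Submodule.sum_mem _ fun m hm => ?_
  rw [map_smul]
  refine Submodule.smul_mem _ _ (Submodule.subset_span ?_)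
  exact ⟨fun x => x ^ m, ⟨m, by simp at hm; omega, rfl⟩, rfl⟩

lemma dim_contra (n : ℕ) (hn : 3 ≤ n) (a b : ℝ) (u v w₁ w₂ : ℝ → ℝ)
    (hgen : genSet n u v = insert w₁ (insert w₂ (monoSet n)))
    (hmem : restrictMap a b w₁ ∈ Submodule.span ℝ
      (insert (restrictMap a b w₂) (restrictMap a b '' monoSet n)))
    (hdim : dimP n u v a b = n) : False := by
  haveI : DecidableEq (Set.Icc a b → ℝ) := Classical.decEq _
  set T : Finset (Set.Icc a b → ℝ) :=
    insert (restrictMap a b w₂) ((Finset.range (n - 2)).image fun i => restrictMap a b (fun s => s ^ i)) with hT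
  have hS : restrictMap a b '' monoSet n ⊆ (T : Set (Set.Icc a b → ℝ)) := by
    rintro f ⟨g, ⟨i, hi, rfl⟩, rfl⟩
    simp only [hT, Finset.coe_insert, Set.mem_insert_iff, Finset.coe_image, Set.mem_image,
      Finset.mem_coe, Finset.mem_range]
    exact Or.inr ⟨i, by omega, rfl⟩
  have hsub : insert (restrictMap a b w₂) (restrictMap a b '' monoSet n) ⊆ (T : Set (Set.Icc a b → ℝ)) := by
    refine Set.insert_subset ?_ hS
    simp [hT]
  have hmem' : restrictMap a b w₁ ∈ Submodule.span ℝ (T : Set (Set.Icc a b → ℝ)) :=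
    Submodule.span_mono hsub hmem
  have hle : (Pspace n u v).map (restrictMap a b) ≤ Submodule.span ℝ (T : Set (Set.Icc a b → ℝ)) := by
    rw [Pspace, Submodule.map_span, Submodule.span_le, hgen, Set.image_insert_eq,
      Set.image_insert_eq]
    refine Set.insert_subset hmem' (Set.insert_subset ?_ ?_)
    · exact Submodule.subset_span (hsub (Set.mem_insert _ _))
    · exact fun f hf => Submodule.subset_span (hsub (Set.mem_insert_of_mem _ hf))
  have h1 : dimP n u v a b ≤ Module.finrank ℝ (Submodule.span ℝ (T : Set (Set.Icc a b → ℝ))) :=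
    Submodule.finrank_mono hle
  have h2 : Module.finrank ℝ (Submodule.span ℝ (T : Set (Set.Icc a b → ℝ))) ≤ T.card := by
    have h := finrank_span_finset_le_card (R := ℝ) T
    rwa [Set.finrank] at h
  have h3 : T.card ≤ n - 1 := by
    refine (Finset.card_insert_le _ _).trans ?_
    have := Finset.card_image_le (s := Finset.range (n - 2)) (f := fun i => restrictMap a b (fun s : ℝ => s ^ i))
    simp only [Finset.card_range] at this
    omega
  omega

end Aux

/-- Existence, uniqueness (as functions on `[a,b]`) and positivity of the
first-level functions `U_{0,1,n-1}`, `U_{1,1,n-1}` in `span⟨u^(n-2), v^(n-2)⟩` with the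
prescribed boundary values. -/
theorem statement0 (n : ℕ) (hn : 3 ≤ n) (a b : ℝ) (hab : a < b) (u v : ℝ → ℝ)
    (hu : ContDiffOn ℝ n u (Set.Icc a b)) (hv : ContDiffOn ℝ n v (Set.Icc a b))
    (hdim : dimP n u v a b = n) (hC1 : CondC1 n u v a b) :
    ∃ U₀ U₁ : ℝ → ℝ,
      U₀ ∈ Submodule.span ℝ {dW a b (n - 2) u, dW a b (n - 2) v} ∧
      U₁ ∈ Submodule.span ℝ {dW a b (n - 2) u, dW a b (n - 2) v} ∧
      U₀ a = 1 ∧ U₀ b = 0 ∧ U₁ a = 0 ∧ U₁ b = 1 ∧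
      (∀ s ∈ Set.Ioo a b, 0 < U₀ s ∧ 0 < U₁ s) ∧
      (∀ W ∈ Submodule.span ℝ {dW a b (n - 2) u, dW a b (n - 2) v},
        (W a = 1 ∧ W b = 0 → Set.EqOn W U₀ (Set.Icc a b)) ∧
        (W a = 0 ∧ W b = 1 → Set.EqOn W U₁ (Set.Icc a b))) := by
  have hud := uniqueDiffOn_Icc hab
  have ha : a ∈ Icc a b := left_mem_Icc.2 hab.le
  have hb : b ∈ Icc a b := right_mem_Icc.2 hab.le
  have hcastu : ContDiffOn ℝ ((n - 2 : ℕ)) u (Icc a b) :=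
    hu.of_le (by exact_mod_cast Nat.sub_le n 2)
  have hcastv : ContDiffOn ℝ ((n - 2 : ℕ)) v (Icc a b) :=
    hv.of_le (by exact_mod_cast Nat.sub_le n 2)
  set Uu := dW a b (n - 2) u with hUu
  set Uv := dW a b (n - 2) v with hUv
  -- linearity of the (n-2)-th derivative
  have hlin : ∀ c d : ℝ, ∀ s ∈ Icc a b,
      dW a b (n - 2) (c • u + d • v) s = c * Uu s + d * Uv s := by
    intro c d s hs
    rw [hUu, hUv]
    unfold dW
    have hcu : ContDiffOn ℝ ((n - 2 : ℕ)) (c • u) (Icc a b) := hcastu.const_smul c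
    have hdv : ContDiffOn ℝ ((n - 2 : ℕ)) (d • v) (Icc a b) := hcastv.const_smul d
    rw [iteratedDerivWithin_add hs hud (hcu s hs) (hdv s hs),
      iteratedDerivWithin_const_smul hs hud c (hcastu s hs),
      iteratedDerivWithin_const_smul hs hud d (hcastv s hs)]
    simp [smul_eq_mul]
  have hmemP : ∀ c d : ℝ, c • u + d • v ∈ Pspace n u v := fun c d =>
    add_mem (Submodule.smul_mem _ _ (Submodule.subset_span (Set.mem_insert _ _)))
      (Submodule.smul_mem _ _ (Submodule.subset_span
        (Set.mem_insert_of_mem _ (Set.mem_insert _ _))))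
  -- two zeros imply identically zero
  have hvanish : ∀ c d : ℝ, ∀ s₁ ∈ Icc a b, ∀ s₂ ∈ Icc a b, s₁ ≠ s₂ →
      c * Uu s₁ + d * Uv s₁ = 0 → c * Uu s₂ + d * Uv s₂ = 0 →
      ∀ s ∈ Icc a b, c * Uu s + d * Uv s = 0 := by
    intro c d s₁ h₁ s₂ h₂ hne e₁ e₂ s hs
    have := hC1 (c • u + d • v) (hmemP c d) s₁ h₁ s₂ h₂ hne
      (by rw [hlin c d s₁ h₁]; exact e₁) (by rw [hlin c d s₂ h₂]; exact e₂) s hs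
    rw [hlin c d s hs] at this
    exact this
  -- linear independence of the restrictions
  have hindep : ∀ c d : ℝ, (∀ s ∈ Icc a b, c * Uu s + d * Uv s = 0) → c = 0 ∧ d = 0 := by
    intro c d h
    by_contra hcd
    have hψ : ContDiffOn ℝ ((n - 2 : ℕ)) (c • u + d • v) (Icc a b) :=
      (hcastu.const_smul c).add (hcastv.const_smul d)
    have h0 : ∀ s ∈ Icc a b, iteratedDerivWithin (n - 2) (c • u + d • v) (Icc a b) s = 0 := by
      intro s hs
      have := hlin c d s hs
      unfold dW at this
      rw [this]
      exact h s hs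
    have hpoly := polyA (k := n - 2) (by omega) hψ h0
    set g : ℝ → ℝ := fun x => ∑ j ∈ Finset.range (n - 2),
      ((Nat.factorial j : ℝ)⁻¹ * iteratedDerivWithin j (c • u + d • v) (Icc a b) a) * (x - a) ^ j
      with hg
    have hrg : restrictMap a b g ∈ Submodule.span ℝ (restrictMap a b '' monoSet n) := by
      have hgs : g = ∑ j ∈ Finset.range (n - 2),
          ((Nat.factorial j : ℝ)⁻¹ * iteratedDerivWithin j (c • u + d • v) (Icc a b) a) •
            (fun x : ℝ => (x - a) ^ j) := by
        funext x
        rw [hg, Finset.sum_apply]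
        exact Finset.sum_congr rfl fun j _ => by simp [smul_eq_mul]
      rw [hgs, map_sum]
      refine Submodule.sum_mem _ fun j hj => ?_
      rw [map_smul]
      exact Submodule.smul_mem _ _ (mono_mem (by simp at hj; omega))
    have hrψ : restrictMap a b (c • u + d • v) = restrictMap a b g := by
      funext x
      exact hpoly x.val x.property
    rcases (by tauto : c ≠ 0 ∨ d ≠ 0) with hc | hd
    · refine dim_contra n hn a b u v u v rfl ?_ hdim
      have heq : restrictMap a b u = c⁻¹ • restrictMap a b (c • u + d • v)
          - (c⁻¹ * d) • restrictMap a b v := by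
        rw [map_add, map_smul, map_smul]
        funext x
        simp only [Pi.sub_apply, Pi.smul_apply, Pi.add_apply, smul_eq_mul]
        field_simp
        ring
      rw [heq, hrψ]
      refine sub_mem (Submodule.smul_mem _ _ ?_) (Submodule.smul_mem _ _ ?_)
      · exact Submodule.span_mono (Set.subset_insert _ _) hrg
      · exact Submodule.subset_span (Set.mem_insert _ _)
    · refine dim_contra n hn a b u v v u (Set.insert_comm _ _ _) ?_ hdim
      have heq : restrictMap a b v = d⁻¹ • restrictMap a b (c • u + d • v)
          - (d⁻¹ * c) • restrictMap a b u := by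
        rw [map_add, map_smul, map_smul]
        funext x
        simp only [Pi.sub_apply, Pi.smul_apply, Pi.add_apply, smul_eq_mul]
        field_simp
        ring
      rw [heq, hrψ]
      refine sub_mem (Submodule.smul_mem _ _ ?_) (Submodule.smul_mem _ _ ?_)
      · exact Submodule.span_mono (Set.subset_insert _ _) hrg
      · exact Submodule.subset_span (Set.mem_insert _ _)
  -- continuity
  have hcont : ∀ c d : ℝ, ContinuousOn (fun s => c * Uu s + d * Uv s) (Icc a b) := by
    intro c d
    have h1 : ContinuousOn Uu (Icc a b) :=
      hu.continuousOn_iteratedDerivWithin (by exact_mod_cast Nat.sub_le n 2) hud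
    have h2 : ContinuousOn Uv (Icc a b) :=
      hv.continuousOn_iteratedDerivWithin (by exact_mod_cast Nat.sub_le n 2) hud
    exact (continuousOn_const.mul h1).add (continuousOn_const.mul h2)
  -- the boundary-value linear map
  let φ : (ℝ × ℝ) →ₗ[ℝ] (ℝ × ℝ) :=
    { toFun := fun p => (p.1 * Uu a + p.2 * Uv a, p.1 * Uu b + p.2 * Uv b)
      map_add' := by intro p q; simp only [Prod.fst_add, Prod.snd_add, Prod.mk_add_mk,
        Prod.mk.injEq]; constructor <;> ring
      map_smul' := by intro m p; simp only [Prod.smul_fst, Prod.smul_snd, smul_eq_mul,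
        RingHom.id_apply, Prod.smul_mk, Prod.mk.injEq]; constructor <;> ring }
  have hinj : Function.Injective φ := by
    rw [injective_iff_map_eq_zero]
    intro p hp
    have hpa : p.1 * Uu a + p.2 * Uv a = 0 := congrArg Prod.fst hp
    have hpb : p.1 * Uu b + p.2 * Uv b = 0 := congrArg Prod.snd hp
    have hz := hvanish p.1 p.2 a ha b hb hab.ne hpa hpb
    have := hindep p.1 p.2 hz
    exact Prod.ext this.1 this.2
  have hsurj : Function.Surjective φ := LinearMap.injective_iff_surjective.1 hinj
  obtain ⟨p₀, hp₀⟩ := hsurj (1, 0)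
  obtain ⟨p₁, hp₁⟩ := hsurj (0, 1)
  set U₀ : ℝ → ℝ := fun s => p₀.1 * Uu s + p₀.2 * Uv s with hU₀
  set U₁ : ℝ → ℝ := fun s => p₁.1 * Uu s + p₁.2 * Uv s with hU₁
  have hU₀a : U₀ a = 1 := congrArg Prod.fst hp₀
  have hU₀b : U₀ b = 0 := congrArg Prod.snd hp₀
  have hU₁a : U₁ a = 0 := congrArg Prod.fst hp₁
  have hU₁b : U₁ b = 1 := congrArg Prod.snd hp₁
  have hmemspan : ∀ p : ℝ × ℝ, (fun s => p.1 * Uu s + p.2 * Uv s) ∈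
      Submodule.span ℝ {Uu, Uv} := by
    intro p
    exact Submodule.mem_span_pair.2 ⟨p.1, p.2, by funext s; simp [smul_eq_mul]⟩
  refine ⟨U₀, U₁, hmemspan p₀, hmemspan p₁, hU₀a, hU₀b, hU₁a, hU₁b, ?_, ?_⟩
  · -- positivity
    intro s hs
    constructor
    · by_contra hle
      push_neg at hle
      have h0mem : (0 : ℝ) ∈ Icc (U₀ s) (U₀ a) := ⟨hle, by rw [hU₀a]; norm_num⟩
      obtain ⟨t, ht, ht0⟩ := intermediate_value_Icc' hs.1.le
        ((hcont p₀.1 p₀.2).mono (Icc_subset_Icc le_rfl hs.2.le)) h0mem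
      have htmem : t ∈ Icc a b := ⟨ht.1, ht.2.trans hs.2.le⟩
      have htb : t ≠ b := fun h => absurd (h ▸ ht.2) (not_le.2 hs.2)
      have hz := hvanish p₀.1 p₀.2 t htmem b hb htb ht0 hU₀b a ha
      rw [show p₀.1 * Uu a + p₀.2 * Uv a = U₀ a from rfl, hU₀a] at hz
      norm_num at hz
    · by_contra hle
      push_neg at hle
      have h0mem : (0 : ℝ) ∈ Icc (U₁ s) (U₁ b) := ⟨hle, by rw [hU₁b]; norm_num⟩
      obtain ⟨t, ht, ht0⟩ := intermediate_value_Icc hs.2.le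
        ((hcont p₁.1 p₁.2).mono (Icc_subset_Icc hs.1.le le_rfl)) h0mem
      have htmem : t ∈ Icc a b := ⟨hs.1.le.trans ht.1, ht.2⟩
      have hta : t ≠ a := fun h => absurd (h ▸ ht.1) (not_le.2 hs.1)
      have hz := hvanish p₁.1 p₁.2 t htmem a ha hta ht0 hU₁a b hb
      rw [show p₁.1 * Uu b + p₁.2 * Uv b = U₁ b from rfl, hU₁b] at hz
      norm_num at hz
  · -- uniqueness
    intro W hW
    obtain ⟨c, d, hcd⟩ := Submodule.mem_span_pair.1 hW
    have hWs : ∀ s : ℝ, W s = c * Uu s + d * Uv s := by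
      intro s
      rw [← hcd]
      simp [smul_eq_mul]
    constructor
    · rintro ⟨hWa, hWb⟩
      intro s hs
      have hdiff : ∀ r ∈ Icc a b, (c - p₀.1) * Uu r + (d - p₀.2) * Uv r = W r - U₀ r := by
        intro r _
        rw [hWs r, hU₀]
        ring
      have hz := hvanish (c - p₀.1) (d - p₀.2) a ha b hb hab.ne
        (by rw [hdiff a ha, hWa, hU₀a]; ring)
        (by rw [hdiff b hb, hWb, hU₀b]; ring) s hs
      rw [hdiff s hs] at hz
      have : W s = U₀ s := by linarith
      exact this
    · rintro ⟨hWa, hWb⟩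
      intro s hs
      have hdiff : ∀ r ∈ Icc a b, (c - p₁.1) * Uu r + (d - p₁.2) * Uv r = W r - U₁ r := by
        intro r _
        rw [hWs r, hU₁]
        ring
      have hz := hvanish (c - p₁.1) (d - p₁.2) a ha b hb hab.ne
        (by rw [hdiff a ha, hWa, hU₁a]; ring)
        (by rw [hdiff b hb, hWb, hU₁b]; ring) s hs
      rw [hdiff s hs] at hz
      have : W s = U₁ s := by linarith
      exact this
end
end

section
/- Let n ≥ 3, let u,v ∈ C^n([a,b]) with dim P^n_{u,v}([a,b]) = n and condition (C1) holding, and let the functions U_{i,k,n-1} be defined by the integral recurrence. Then for all i = 0, ..., k and k = 2, ..., n-1: the j-th derivative U_{i,k,n-1}^{(j)}(a) = 0 for j = 0, ..., i-1, and U_{i,k,n-1}^{(j)}(b) = 0 for j = 0, ..., k-i-1. In particular, for k = n-1 the Bernstein functions B_{i,n-1} := U_{i,n-1,n-1} satisfy B_{i,n-1}^{(j)}(a) = 0 for j = 0, ..., i-1 and B_{i,n-1}^{(j)}(b) = 0 for j = 0, ..., n-i-2. -/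
open Set

noncomputable section

/-- The number `d_{i,k,n-1} = ∫_a^b U_{i,k,n-1}(t) dt`. -/
def dInt (a b : ℝ) (U : ℕ → ℕ → ℝ → ℝ) (i k : ℕ) : ℝ :=
  ∫ t in a..b, U i k t

/-- The function `V_{i,k,n-1}(s) = ∫_a^s U_{i,k,n-1}(t)/d_{i,k,n-1} dt`. -/
def Vfun (a b : ℝ) (U : ℕ → ℕ → ℝ → ℝ) (i k : ℕ) (s : ℝ) : ℝ :=
  ∫ t in a..s, U i k t / dInt a b U i k

/-- The integral recurrence defining the functions `U_{i,k,n-1}` (the second index of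
`U` is `k`, the third index `n-1` being fixed). -/
structure Recur (n : ℕ) (u v : ℝ → ℝ) (a b : ℝ) (U : ℕ → ℕ → ℝ → ℝ) : Prop where
  base₀_mem : U 0 1 ∈ Submodule.span ℝ {dW a b (n - 2) u, dW a b (n - 2) v}
  base₁_mem : U 1 1 ∈ Submodule.span ℝ {dW a b (n - 2) u, dW a b (n - 2) v}
  base₀_a : U 0 1 a = 1
  base₀_b : U 0 1 b = 0
  base₁_a : U 1 1 a = 0
  base₁_b : U 1 1 b = 1
  base_pos : ∀ s ∈ Set.Ioo a b, 0 < U 0 1 s ∧ 0 < U 1 1 s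
  rec_zero : ∀ k, 2 ≤ k → k ≤ n - 1 → ∀ s, U 0 k s = 1 - Vfun a b U 0 (k - 1) s
  rec_mid : ∀ k, 2 ≤ k → k ≤ n - 1 → ∀ i, 1 ≤ i → i ≤ k - 1 → ∀ s,
    U i k s = Vfun a b U (i - 1) (k - 1) s - Vfun a b U i (k - 1) s
  rec_top : ∀ k, 2 ≤ k → k ≤ n - 1 → ∀ s, U k k s = Vfun a b U (k - 1) (k - 1) s


section Helpers

open intervalIntegral MeasureTheory Topology Filter

variable {a b : ℝ}

lemma dW_zero (a b : ℝ) (f : ℝ → ℝ) : dW a b 0 f = f := by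
  ext x; simp [dW]

lemma dW_congr (hab : a < b) {f g : ℝ → ℝ} (h : ∀ x ∈ Set.Icc a b, f x = g x) (j : ℕ) :
    ∀ x ∈ Set.Icc a b, dW a b j f x = dW a b j g x := by
  intro x hx
  exact iteratedDerivWithin_congr (fun y hy => h y hy) hx

lemma dW_succ_fun (hab : a < b) (f : ℝ → ℝ) (j : ℕ) :
    ∀ x ∈ Set.Icc a b, dW a b (j+1) f x = dW a b j (derivWithin f (Set.Icc a b)) x := by
  intro x hx
  exact congrFun iteratedDerivWithin_succ' x

lemma hasDerivWithinAt_derivWithin (hab : a < b) {f : ℝ → ℝ} {c : ℝ} {x : ℝ}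
    (hx : x ∈ Set.Icc a b) (h : HasDerivWithinAt f c (Set.Icc a b) x) :
    derivWithin f (Set.Icc a b) x = c :=
  h.derivWithin ((uniqueDiffOn_Icc hab).uniqueDiffWithinAt hx)

lemma dW_comp (hab : a < b) (f : ℝ → ℝ) (j m : ℕ) :
    ∀ x ∈ Set.Icc a b, dW a b j (dW a b m f) x = dW a b (j + m) f x := by
  induction j with
  | zero => intro x hx; simp [dW]
  | succ j ih =>
    intro x hx
    have h1 : dW a b (j+1) (dW a b m f) x
        = derivWithin (dW a b j (dW a b m f)) (Set.Icc a b) x := by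
      exact congrFun (iteratedDerivWithin_succ (n := j) (f := dW a b m f) (s := Set.Icc a b)) x
    rw [h1]
    have h2 : derivWithin (dW a b j (dW a b m f)) (Set.Icc a b) x
        = derivWithin (dW a b (j + m) f) (Set.Icc a b) x := by
      apply derivWithin_congr
      · intro y hy; exact ih y hy
      · exact ih x hx
    rw [h2]
    have h3 := congrFun (iteratedDerivWithin_succ (n := j + m) (f := f) (s := Set.Icc a b)) x
    show derivWithin (iteratedDerivWithin (j+m) f (Set.Icc a b)) (Set.Icc a b) x
      = dW a b (j+1+m) f x
    have : j + 1 + m = (j + m) + 1 := by omega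
    rw [this]
    exact h3.symm

lemma dW_combo (hab : a < b) {f g : ℝ → ℝ} {N : ℕ} (c d : ℝ)
    (hf : ContDiffOn ℝ N f (Set.Icc a b)) (hg : ContDiffOn ℝ N g (Set.Icc a b))
    {j : ℕ} (hj : j ≤ N) :
    ∀ x ∈ Set.Icc a b, dW a b j (fun t => c * f t + d * g t) x
      = c * dW a b j f x + d * dW a b j g x := by
  intro x hx
  have h := uniqueDiffOn_Icc hab
  have hf' : ContDiffOn ℝ j f (Set.Icc a b) := hf.of_le (by exact_mod_cast hj)
  have hg' : ContDiffOn ℝ j g (Set.Icc a b) := hg.of_le (by exact_mod_cast hj)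
  have hfun : (fun t => c * f t + d * g t) = (c • f) + (d • g) := by
    funext t; simp [smul_eq_mul]
  rw [dW, hfun]
  have key := iteratedDerivWithin_add hx h (hf'.const_smul c x hx) (hg'.const_smul d x hx)
  have k2 := iteratedDerivWithin_const_smul hx h c (hf' x hx)
  have k3 := iteratedDerivWithin_const_smul hx h d (hg' x hx)
  calc iteratedDerivWithin j (c • f + d • g) (Set.Icc a b) x
      = iteratedDerivWithin j (c • f) (Set.Icc a b) x
        + iteratedDerivWithin j (d • g) (Set.Icc a b) x := key
    _ = c * dW a b j f x + d * dW a b j g x := by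
        rw [k2, k3]; simp [dW, smul_eq_mul]

lemma dW_contDiffOn (hab : a < b) {f : ℝ → ℝ} {N m r : ℕ}
    (hf : ContDiffOn ℝ N f (Set.Icc a b)) (hmr : m + r ≤ N) :
    ContDiffOn ℝ r (dW a b m f) (Set.Icc a b) := by
  have hD := uniqueDiffOn_Icc hab
  have key : ContDiffOn ℝ ((r : ℕ∞) : WithTop ℕ∞) (dW a b m f) (Set.Icc a b) := by
    rw [contDiffOn_iff_continuousOn_differentiableOn_deriv hD]
    constructor
    · intro m' hm'
      have hm'r : m' ≤ r := by exact_mod_cast hm'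
      have hcont : ContinuousOn (dW a b (m' + m) f) (Set.Icc a b) :=
        hf.continuousOn_iteratedDerivWithin (by exact_mod_cast (by omega : m' + m ≤ N)) hD
      exact hcont.congr (fun x hx => dW_comp hab f m' m x hx)
    · intro m' hm'
      have hm'r : m' < r := by exact_mod_cast hm'
      have hdiff : DifferentiableOn ℝ (dW a b (m' + m) f) (Set.Icc a b) :=
        hf.differentiableOn_iteratedDerivWithin (by exact_mod_cast (by omega : m' + m < N)) hD
      exact hdiff.congr (fun x hx => dW_comp hab f m' m x hx)
  exact_mod_cast key

lemma Pspace_smooth {n : ℕ} {u v : ℝ → ℝ} (hab : a < b)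
    (hu : ContDiffOn ℝ n u (Set.Icc a b)) (hv : ContDiffOn ℝ n v (Set.Icc a b)) :
    ∀ ψ ∈ Pspace n u v, ContDiffOn ℝ n ψ (Set.Icc a b) := by
  intro ψ hψ
  induction hψ using Submodule.span_induction with
  | mem x hx =>
    rcases hx with rfl | rfl | ⟨i, hi, rfl⟩
    · exact hu
    · exact hv
    · exact ((contDiff_id (𝕜 := ℝ)).pow i).contDiffOn
  | zero => exact contDiffOn_const
  | add x y _ _ hx hy => exact hx.add hy
  | smul c x _ hx => exact hx.const_smul c

lemma dW_pow (hab : a < b) (m : ℕ) :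
    ∀ x ∈ Set.Icc a b, dW a b m (fun t : ℝ => t ^ m) x = (m.factorial : ℝ) := by
  induction m with
  | zero => intro x hx; simp [dW]
  | succ m ih =>
    intro x hx
    rw [dW_succ_fun hab _ m x hx]
    have hder : ∀ y ∈ Set.Icc a b,
        derivWithin (fun t : ℝ => t ^ (m+1)) (Set.Icc a b) y = ((m:ℝ) + 1) * y ^ m := by
      intro y hy
      rw [(differentiableAt_pow (m+1)).derivWithin ((uniqueDiffOn_Icc hab).uniqueDiffWithinAt hy),
        deriv_pow_field, Nat.add_sub_cancel]
      push_cast; ring_nf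
    have e1 : dW a b m (derivWithin (fun t : ℝ => t ^ (m+1)) (Set.Icc a b)) x
        = dW a b m (fun t : ℝ => ((m:ℝ)+1) * t ^ m + 0 * t ^ m) x := by
      apply dW_congr hab (fun y hy => by rw [hder y hy]; ring) m x hx
    have hcd : ContDiffOn ℝ (m:ℕ) (fun t : ℝ => t ^ m) (Set.Icc a b) :=
      ((contDiff_id (𝕜 := ℝ)).pow m).contDiffOn
    rw [e1, dW_combo hab ((m:ℝ)+1) 0 hcd hcd le_rfl x hx, ih x hx]
    rw [Nat.factorial_succ]
    push_cast; ring

lemma FTC_Icc (hab : a < b) {w : ℝ → ℝ} (hw : ContinuousOn w (Set.Icc a b)) :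
    ∀ x ∈ Set.Icc a b, HasDerivWithinAt (fun t => ∫ τ in a..t, w τ) (w x) (Set.Icc a b) x := by
  intro x hx
  have hint : IntervalIntegrable w MeasureTheory.volume a x := by
    apply ContinuousOn.intervalIntegrable
    rw [Set.uIcc_of_le hx.1]
    exact hw.mono (Set.Icc_subset_Icc le_rfl hx.2)
  have hright : x < b → HasDerivWithinAt (fun t => ∫ τ in a..t, w τ) (w x) (Set.Ici x) x := by
    intro hxb
    apply intervalIntegral.integral_hasDerivWithinAt_right (t := Set.Ioi x) hint
    · refine ⟨Set.Ioc x b, ?_, ?_⟩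
      · exact Filter.mem_of_superset (inter_mem_nhdsWithin _ (Iic_mem_nhds hxb))
          (by rw [Set.Ioi_inter_Iic])
      · exact (hw.mono (Set.Ioc_subset_Icc_self.trans (Set.Icc_subset_Icc hx.1 le_rfl))).aestronglyMeasurable
          measurableSet_Ioc
    · refine (hw x hx).mono_left (nhdsWithin_le_iff.mpr ?_)
      exact Filter.mem_of_superset (inter_mem_nhdsWithin _ (Iic_mem_nhds hxb))
        (by rw [Set.Ioi_inter_Iic]; exact Set.Ioc_subset_Icc_self.trans (Set.Icc_subset_Icc hx.1 le_rfl))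
  have hleft : a < x → HasDerivWithinAt (fun t => ∫ τ in a..t, w τ) (w x) (Set.Iic x) x := by
    intro hax
    apply intervalIntegral.integral_hasDerivWithinAt_right (t := Set.Iic x) hint
    · refine ⟨Set.Icc a x, ?_, ?_⟩
      · exact Filter.mem_of_superset (inter_mem_nhdsWithin _ (Ici_mem_nhds hax))
          (fun y hy => ⟨hy.2, hy.1⟩)
      · exact (hw.mono (Set.Icc_subset_Icc le_rfl hx.2)).aestronglyMeasurable measurableSet_Icc
    · refine (hw x hx).mono_left (nhdsWithin_le_iff.mpr ?_)
      refine Filter.mem_of_superset (inter_mem_nhdsWithin _ (Ici_mem_nhds hax)) ?_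
      intro y hy
      exact ⟨hy.2, hy.1.trans hx.2⟩
  rcases eq_or_lt_of_le hx.1 with rfl | hax
  · exact (hright hab).mono Set.Icc_subset_Ici_self
  · rcases eq_or_lt_of_le hx.2 with rfl | hxb
    · exact (hleft hax).mono Set.Icc_subset_Iic_self
    · exact ((hright hxb).union (hleft hax)).mono
        (fun y _ => (le_total x y).imp (fun h => h) (fun h => h))

lemma const_of_hasDerivWithinAt_zero (hab : a < b) {f : ℝ → ℝ}
    (hf : ContinuousOn f (Set.Icc a b))
    (hd : ∀ x ∈ Set.Icc a b, HasDerivWithinAt f 0 (Set.Icc a b) x) :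
    ∀ x ∈ Set.Icc a b, f x = f a := by
  apply constant_of_has_deriv_right_zero hf
  intro y hy
  refine (hd y ⟨hy.1, hy.2.le⟩).mono_of_mem_nhdsWithin ?_
  rw [← nhdsWithin_Icc_eq_nhdsGE hy.2]
  exact Filter.mem_of_superset self_mem_nhdsWithin (Set.Icc_subset_Icc hy.1 le_rfl)

lemma rolle_finset (hab : a < b) {g : ℝ → ℝ} (hg : ContinuousOn g (Set.Icc a b)) :
    ∀ N : ℕ, ∀ Z : Finset ℝ, Z.card ≤ N → ↑Z ⊆ Set.Icc a b → (∀ x ∈ Z, g x = 0) →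
    ∀ hne : Z.Nonempty, ∃ Z' : Finset ℝ,
      Z.card ≤ Z'.card + 1 ∧ ↑Z' ⊆ Set.Ioo (Z.min' hne) (Z.max' hne) ∧
      ∀ x ∈ Z', deriv g x = 0 := by
  intro N
  induction N with
  | zero =>
    intro Z hcard _ _ hne
    exact absurd (Finset.card_eq_zero.mp (Nat.le_zero.mp hcard)) (Finset.nonempty_iff_ne_empty.mp hne)
  | succ N ih =>
    intro Z hcard hZ h0 hne
    by_cases h1 : Z.card ≤ 1
    · exact ⟨∅, by omega, by simp, by simp⟩
    · have hc2 : 2 ≤ Z.card := by omega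
      have hMmem : Z.max' hne ∈ Z := Z.max'_mem hne
      have hne0 : (Z.erase (Z.max' hne)).Nonempty := by
        rw [← Finset.card_pos, Finset.card_erase_of_mem hMmem]; omega
      set M := Z.max' hne with hM
      set Z0 := Z.erase M with hZ0
      set M0 := Z0.max' hne0 with hM0
      have hM0mem : M0 ∈ Z0 := Z0.max'_mem hne0
      have hM0Z : M0 ∈ Z := Finset.mem_of_mem_erase hM0mem
      have hM0M : M0 < M :=
        lt_of_le_of_ne (Z.le_max' M0 hM0Z) (Finset.ne_of_mem_erase hM0mem)
      obtain ⟨c, hcmem, hc0⟩ := exists_deriv_eq_zero hM0M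
        (hg.mono (Set.Icc_subset_Icc (hZ hM0Z).1 (hZ hMmem).2))
        (by rw [h0 M0 hM0Z, h0 M hMmem])
      obtain ⟨Z'0, hcard0, hsub0, hder0⟩ := ih Z0
        (by rw [hZ0, Finset.card_erase_of_mem hMmem]; omega)
        (fun y hy => hZ (Finset.mem_of_mem_erase hy))
        (fun y hy => h0 y (Finset.mem_of_mem_erase hy)) hne0
      have hcnot : c ∉ Z'0 := fun hc => absurd (hsub0 hc).2 (by push_neg; exact hcmem.1.le)
      refine ⟨insert c Z'0, ?_, ?_, ?_⟩
      · rw [Finset.card_insert_of_notMem hcnot]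
        have : Z0.card = Z.card - 1 := by rw [hZ0, Finset.card_erase_of_mem hMmem]
        omega
      · intro y hy
        rcases Finset.mem_insert.mp hy with rfl | hy'
        · exact ⟨lt_of_le_of_lt (Z.min'_le M0 hM0Z) hcmem.1, hcmem.2⟩
        · have h2 := hsub0 hy'
          exact ⟨lt_of_le_of_lt (Z.min'_le _ (Finset.mem_of_mem_erase (Z0.min'_mem hne0))) h2.1,
            lt_trans h2.2 hM0M⟩
      · intro y hy
        rcases Finset.mem_insert.mp hy with rfl | hy'
        · exact hc0
        · exact hder0 y hy'

lemma sign_near_left (hab : a < b) :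
    ∀ (m : ℕ) (f : ℝ → ℝ), ContDiffOn ℝ (m+1) f (Set.Icc a b) →
    (∀ j < m, dW a b j f a = 0) → 0 < dW a b m f a →
    ∃ δ > 0, a + δ ≤ b ∧ ∀ x ∈ Set.Ioc a (a+δ), 0 < f x := by
  intro m
  induction m with
  | zero =>
    intro f hf _ hpos
    rw [dW_zero] at hpos
    have hc : ContinuousWithinAt f (Set.Icc a b) a :=
      hf.continuousOn.continuousWithinAt ⟨le_rfl, hab.le⟩
    have hev : ∀ᶠ y in 𝓝[Set.Icc a b] a, 0 < f y := hc.eventually (eventually_gt_nhds hpos)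
    rw [nhdsWithin_Icc_eq_nhdsGE hab] at hev
    obtain ⟨u, hu, hub⟩ := mem_nhdsGE_iff_exists_Icc_subset.mp hev
    refine ⟨min (u - a) (b - a), by simp [sub_pos, hu, hab], by
      have := min_le_right (u - a) (b - a); linarith, ?_⟩
    intro x hx
    exact hub ⟨hx.1.le, by have := min_le_left (u - a) (b - a); have := hx.2; linarith⟩
  | succ m ih =>
    intro f hf h0 hpos
    have hD := uniqueDiffOn_Icc hab
    set f' := derivWithin f (Set.Icc a b) with hf'def
    have hf' : ContDiffOn ℝ (m+1) f' (Set.Icc a b) := by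
      apply hf.derivWithin hD
      norm_cast
    have h0' : ∀ j < m, dW a b j f' a = 0 := fun j hj =>
      (dW_succ_fun hab f j a ⟨le_rfl, hab.le⟩).symm.trans (h0 (j+1) (by omega))
    have hpos' : 0 < dW a b m f' a :=
      lt_of_lt_of_eq hpos (dW_succ_fun hab f m a ⟨le_rfl, hab.le⟩)
    obtain ⟨δ, hδ, hδb, hδpos⟩ := ih f' hf' h0' hpos'
    have hdOn : DifferentiableOn ℝ f (Set.Icc a b) := hf.differentiableOn (by norm_cast)
    have hmono : StrictMonoOn f (Set.Icc a (a+δ)) := by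
      apply strictMonoOn_of_deriv_pos (convex_Icc _ _)
        (hf.continuousOn.mono (Set.Icc_subset_Icc le_rfl hδb))
      intro x hx
      rw [interior_Icc] at hx
      have hxb : x < b := lt_of_lt_of_le hx.2 hδb
      have hxI : x ∈ Set.Icc a b := ⟨hx.1.le, hxb.le⟩
      have hdAt : DifferentiableAt ℝ f x :=
        (hdOn x hxI).differentiableAt (Icc_mem_nhds hx.1 hxb)
      rw [← hdAt.derivWithin (hD.uniqueDiffWithinAt hxI)]
      exact hδpos x ⟨hx.1, hx.2.le⟩
    have hfa : f a = 0 := by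
      have := h0 0 (by omega); rwa [dW_zero] at this
    refine ⟨δ, hδ, hδb, ?_⟩
    intro x hx
    have := hmono (Set.left_mem_Icc.mpr (by linarith)) ⟨hx.1.le, hx.2⟩ hx.1
    rw [hfa] at this
    exact this

lemma dW_neg_fun (hab : a < b) (f : ℝ → ℝ) (j : ℕ) :
    ∀ x ∈ Set.Icc a b, dW a b j (fun t => -f t) x = -dW a b j f x := by
  intro x hx
  exact iteratedDerivWithin_fun_neg f

lemma dW_nonneg_left (hab : a < b) {f : ℝ → ℝ} {m : ℕ}
    (hf : ContDiffOn ℝ (m+1) f (Set.Icc a b))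
    (h0 : ∀ j < m, dW a b j f a = 0) (hnn : ∀ x ∈ Set.Icc a b, 0 ≤ f x) :
    0 ≤ dW a b m f a := by
  by_contra hneg
  push_neg at hneg
  obtain ⟨δ, hδ, hδb, hδpos⟩ := sign_near_left hab m (fun t => -f t)
    (by have : (fun t => -f t) = -f := rfl; rw [this]; exact hf.neg)
    (fun j hj => by rw [dW_neg_fun hab f j a ⟨le_rfl, hab.le⟩, h0 j hj, neg_zero])
    (by rw [dW_neg_fun hab f m a ⟨le_rfl, hab.le⟩]; linarith)
  have hx : a + δ ∈ Set.Icc a b := ⟨by linarith, hδb⟩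
  have := hδpos (a+δ) ⟨by linarith, le_rfl⟩
  have := hnn (a+δ) hx
  linarith

lemma Dprime {n : ℕ} {u v : ℝ → ℝ} (hab : a < b)
    (hu : ContDiffOn ℝ n u (Set.Icc a b)) (hv : ContDiffOn ℝ n v (Set.Icc a b))
    (hC1 : CondC1 n u v a b) :
    ∀ (t : ℕ), t + 2 ≤ n → ∀ ψ ∈ Pspace n u v, ∀ (p q : ℕ) (S : Finset ℝ),
      p ≤ t + 1 → q ≤ t + 1 → ↑S ⊆ Set.Ioo a b →
      (∀ x ∈ S, dW a b (n-2-t) ψ x = 0) →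
      (∀ j < p, dW a b (n-2-t+j) ψ a = 0) →
      (∀ j < q, dW a b (n-2-t+j) ψ b = 0) →
      t + 2 ≤ p + q + S.card →
      ∀ x ∈ Set.Icc a b, dW a b (n-2-t) ψ x = 0 := by
  have hD := uniqueDiffOn_Icc hab
  have haI : a ∈ Set.Icc a b := ⟨le_rfl, hab.le⟩
  have hbI : b ∈ Set.Icc a b := ⟨hab.le, le_rfl⟩
  intro t
  induction t with
  | zero =>
    intro _ ψ hψ p q S hp hq hS hS0 hpa hqa hsum
    have key : ∃ s₁ ∈ Set.Icc a b, ∃ s₂ ∈ Set.Icc a b, s₁ ≠ s₂ ∧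
        dW a b (n-2) ψ s₁ = 0 ∧ dW a b (n-2) ψ s₂ = 0 := by
      have hpa0 : 1 ≤ p → dW a b (n-2) ψ a = 0 := fun h => by
        have := hpa 0 (by omega); simpa using this
      have hqa0 : 1 ≤ q → dW a b (n-2) ψ b = 0 := fun h => by
        have := hqa 0 (by omega); simpa using this
      rcases Nat.eq_zero_or_pos p with hp0 | hp1
      · rcases Nat.eq_zero_or_pos q with hq0 | hq1
        · have h2 : 2 ≤ S.card := by omega
          obtain ⟨z₁, hz₁, z₂, hz₂, hne⟩ := Finset.one_lt_card.mp (show 1 < S.card by omega)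
          exact ⟨z₁, Set.Ioo_subset_Icc_self (hS hz₁), z₂, Set.Ioo_subset_Icc_self (hS hz₂),
            hne, hS0 z₁ hz₁, hS0 z₂ hz₂⟩
        · rcases Nat.eq_zero_or_pos S.card with hs0 | hs1
          · exact absurd hsum (by omega)
          · obtain ⟨z, hz⟩ := Finset.card_pos.mp hs1
            exact ⟨b, hbI, z, Set.Ioo_subset_Icc_self (hS hz),
              (ne_of_gt (hS hz).2), hqa0 hq1, hS0 z hz⟩
      · rcases Nat.eq_zero_or_pos q with hq0 | hq1
        · rcases Nat.eq_zero_or_pos S.card with hs0 | hs1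
          · exact absurd hsum (by omega)
          · obtain ⟨z, hz⟩ := Finset.card_pos.mp hs1
            exact ⟨a, haI, z, Set.Ioo_subset_Icc_self (hS hz),
              (ne_of_lt (hS hz).1), hpa0 hp1, hS0 z hz⟩
        · exact ⟨a, haI, b, hbI, hab.ne, hpa0 hp1, hqa0 hq1⟩
    obtain ⟨s₁, hs₁, s₂, hs₂, hne, h1, h2⟩ := key
    exact hC1 ψ hψ s₁ hs₁ s₂ hs₂ hne h1 h2
  | succ t ih =>
    intro ht ψ hψ p q S hp hq hS hS0 hpa hqa hsum
    have htn : t + 1 ≤ n - 2 := by omega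
    set m := n - 2 - (t+1) with hm
    have hm1 : m + 1 = n - 2 - t := by omega
    have hψC : ContDiffOn ℝ n ψ (Set.Icc a b) := Pspace_smooth hab hu hv ψ hψ
    set f := dW a b m ψ with hfdef
    have hfc : ContinuousOn f (Set.Icc a b) :=
      hψC.continuousOn_iteratedDerivWithin (by exact_mod_cast (by omega : m ≤ n)) hD
    have hfd : DifferentiableOn ℝ f (Set.Icc a b) :=
      hψC.differentiableOn_iteratedDerivWithin (by exact_mod_cast (by omega : m < n)) hD
    -- the zero set
    set Za : Finset ℝ := if 1 ≤ p then {a} else ∅ with hZa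
    set Zb : Finset ℝ := if 1 ≤ q then {b} else ∅ with hZb
    set Z : Finset ℝ := S ∪ Za ∪ Zb with hZ
    have hZaC : Za.card = min p 1 := by rw [hZa]; split_ifs with h <;> simp <;> omega
    have hZbC : Zb.card = min q 1 := by rw [hZb]; split_ifs with h <;> simp <;> omega
    have hdisj1 : Disjoint S Za := by
      rw [Finset.disjoint_left]
      intro y hyS hyZa
      rw [hZa] at hyZa; split_ifs at hyZa
      · rw [Finset.mem_singleton] at hyZa
        exact absurd (hS hyS).1 (by rw [hyZa]; exact lt_irrefl a)
      · simp at hyZa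
    have hdisj2 : Disjoint (S ∪ Za) Zb := by
      rw [Finset.disjoint_left]
      intro y hyU hyZb
      rw [hZb] at hyZb; split_ifs at hyZb
      · rw [Finset.mem_singleton] at hyZb
        rcases Finset.mem_union.mp hyU with h | h
        · exact absurd (hS h).2 (by rw [hyZb]; exact lt_irrefl b)
        · rw [hZa] at h; split_ifs at h
          · rw [Finset.mem_singleton] at h
            exact hab.ne (h ▸ hyZb)
          · simp at h
      · simp at hyZb
    have hZcard : Z.card = S.card + min p 1 + min q 1 := by
      rw [hZ, Finset.card_union_of_disjoint hdisj2, Finset.card_union_of_disjoint hdisj1,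
        hZaC, hZbC]
    have hZsub : ↑Z ⊆ Set.Icc a b := by
      intro x hx
      rcases Finset.mem_union.mp hx with h | h
      · rcases Finset.mem_union.mp h with h | h
        · exact Set.Ioo_subset_Icc_self (hS h)
        · rw [hZa] at h; split_ifs at h
          · rw [Finset.mem_singleton] at h; subst h; exact haI
          · simp at h
      · rw [hZb] at h; split_ifs at h
        · rw [Finset.mem_singleton] at h; subst h; exact hbI
        · simp at h
    have hZ0 : ∀ x ∈ Z, f x = 0 := by
      intro x hx
      rcases Finset.mem_union.mp hx with h | h
      · rcases Finset.mem_union.mp h with h | h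
        · exact hS0 x h
        · rw [hZa] at h; split_ifs at h with h1
          · rw [Finset.mem_singleton] at h; subst h
            have := hpa 0 (by omega); simpa using this
          · simp at h
      · rw [hZb] at h; split_ifs at h with h1
        · rw [Finset.mem_singleton] at h; subst h
          have := hqa 0 (by omega); simpa using this
        · simp at h
    have hZne : Z.Nonempty := by
      rw [← Finset.card_pos, hZcard]; omega
    obtain ⟨Z', hZ'card, hZ'sub, hZ'der⟩ :=
      rolle_finset hab hfc Z.card Z le_rfl hZsub hZ0 hZne
    have hZ'Ioo : ↑Z' ⊆ Set.Ioo a b := by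
      intro x hx
      have h1 := hZ'sub hx
      have hmin := (hZsub (Finset.mem_coe.mpr (Z.min'_mem hZne))).1
      have hmax := (hZsub (Finset.mem_coe.mpr (Z.max'_mem hZne))).2
      exact ⟨lt_of_le_of_lt hmin h1.1, lt_of_lt_of_le h1.2 hmax⟩
    have hZ'0 : ∀ x ∈ Z', dW a b (n-2-t) ψ x = 0 := by
      intro x hx
      have hxI := hZ'Ioo hx
      have e1 : dW a b (n-2-t) ψ x = derivWithin f (Set.Icc a b) x := by
        rw [← hm1]
        exact congrFun iteratedDerivWithin_succ x
      rw [e1, derivWithin_of_mem_nhds (Icc_mem_nhds hxI.1 hxI.2)]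
      exact hZ'der x hx
    have harr : ∀ j, n - 2 - t + j = n - 2 - (t+1) + (j+1) := by omega
    have ihc := ih (by omega) ψ hψ (p-1) (q-1) Z' (by omega) (by omega) hZ'Ioo hZ'0
      (fun j hj => by rw [harr j]; exact hpa (j+1) (by omega))
      (fun j hj => by rw [harr j]; exact hqa (j+1) (by omega))
      (by omega)
    -- f has derivative zero everywhere on the interval
    have hd0 : ∀ x ∈ Set.Icc a b, HasDerivWithinAt f 0 (Set.Icc a b) x := by
      intro x hx
      have h1 := (hfd x hx).hasDerivWithinAt
      have e1 : derivWithin f (Set.Icc a b) x = dW a b (n-2-t) ψ x := by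
        rw [← hm1]
        exact (congrFun iteratedDerivWithin_succ x).symm
      rw [e1, ihc x hx] at h1
      exact h1
    have hconst := const_of_hasDerivWithinAt_zero hab hfc hd0
    have hfa0 : f a = 0 := by
      rcases Nat.eq_zero_or_pos p with hp0 | hp1
      · rcases Nat.eq_zero_or_pos q with hq0 | hq1
        · have hs1 : 1 ≤ S.card := by omega
          obtain ⟨z, hz⟩ := Finset.card_pos.mp hs1
          rw [← hS0 z hz, hconst z (Set.Ioo_subset_Icc_self (hS hz))]
        · rw [← hqa 0 (by omega), ← hconst b hbI]; simp [hfdef]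
      · have := hpa 0 (by omega); simpa using this
    intro x hx
    show f x = 0
    rw [hconst x hx]; exact hfa0

def GoodLevel (n : ℕ) (u v : ℝ → ℝ) (a b : ℝ) (U : ℕ → ℕ → ℝ → ℝ) (k : ℕ) : Prop :=
  ∀ i ≤ k,
    (∃ ψ ∈ Pspace n u v, ∀ x ∈ Set.Icc a b, U i k x = dW a b (n-1-k) ψ x) ∧
    (U i k a = if i = 0 then 1 else 0) ∧
    (U i k b = if i = k then 1 else 0) ∧
    (∀ j < i, dW a b j (U i k) a = 0) ∧
    (∀ j, j + i + 1 ≤ k → dW a b j (U i k) b = 0) ∧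
    (∀ x ∈ Set.Ioo a b, 0 < U i k x) ∧
    (i < k → 0 < dW a b i (U i k) a)

lemma GoodLevel.contOn {n k : ℕ} {u v : ℝ → ℝ} {U : ℕ → ℕ → ℝ → ℝ} (hab : a < b)
    (hu : ContDiffOn ℝ n u (Set.Icc a b)) (hv : ContDiffOn ℝ n v (Set.Icc a b))
    (hG : GoodLevel n u v a b U k) :
    ∀ i ≤ k, ContinuousOn (U i k) (Set.Icc a b) := by
  intro i hi
  obtain ⟨ψ, hψ, hrep⟩ := (hG i hi).1
  exact ((Pspace_smooth hab hu hv ψ hψ).continuousOn_iteratedDerivWithin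
    (by exact_mod_cast (by omega : n - 1 - k ≤ n)) (uniqueDiffOn_Icc hab)).congr hrep

lemma GoodLevel.smoothOn {n k : ℕ} {u v : ℝ → ℝ} {U : ℕ → ℕ → ℝ → ℝ} (hab : a < b)
    (hu : ContDiffOn ℝ n u (Set.Icc a b)) (hv : ContDiffOn ℝ n v (Set.Icc a b))
    (hG : GoodLevel n u v a b U k) :
    ∀ i ≤ k, ∀ r : ℕ, (n-1-k) + r ≤ n → ContDiffOn ℝ r (U i k) (Set.Icc a b) := by
  intro i hi r hr
  obtain ⟨ψ, hψ, hrep⟩ := (hG i hi).1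
  exact (dW_contDiffOn hab (Pspace_smooth hab hu hv ψ hψ) hr).congr hrep

lemma GoodLevel.intInt {n k : ℕ} {u v : ℝ → ℝ} {U : ℕ → ℕ → ℝ → ℝ} (hab : a < b)
    (hu : ContDiffOn ℝ n u (Set.Icc a b)) (hv : ContDiffOn ℝ n v (Set.Icc a b))
    (hG : GoodLevel n u v a b U k) :
    ∀ i ≤ k, ∀ c d : ℝ, c ∈ Set.Icc a b → d ∈ Set.Icc a b → c ≤ d →
      IntervalIntegrable (fun t => U i k t / dInt a b U i k) MeasureTheory.volume c d := by
  intro i hi c d hc hd hcd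
  apply ContinuousOn.intervalIntegrable
  rw [Set.uIcc_of_le hcd]
  exact ((GoodLevel.contOn hab hu hv hG i hi).div_const _).mono
    (Set.Icc_subset_Icc hc.1 hd.2)

lemma GoodLevel.dIntPos {n k : ℕ} {u v : ℝ → ℝ} {U : ℕ → ℕ → ℝ → ℝ} (hab : a < b)
    (hu : ContDiffOn ℝ n u (Set.Icc a b)) (hv : ContDiffOn ℝ n v (Set.Icc a b))
    (hG : GoodLevel n u v a b U k) :
    ∀ i ≤ k, 0 < dInt a b U i k := by
  intro i hi
  apply intervalIntegral_pos_of_pos_on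
  · apply ContinuousOn.intervalIntegrable
    rw [Set.uIcc_of_le hab.le]
    exact GoodLevel.contOn hab hu hv hG i hi
  · exact fun x hx => (hG i hi).2.2.2.2.2.1 x hx
  · exact hab

lemma goodLevel_one {n : ℕ} {u v : ℝ → ℝ} {U : ℕ → ℕ → ℝ → ℝ} (hn : 3 ≤ n) (hab : a < b)
    (hu : ContDiffOn ℝ n u (Set.Icc a b)) (hv : ContDiffOn ℝ n v (Set.Icc a b))
    (hU : Recur n u v a b U) : GoodLevel n u v a b U 1 := by
  have haI : a ∈ Set.Icc a b := ⟨le_rfl, hab.le⟩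
  have hrep : ∀ i ≤ 1, ∃ ψ ∈ Pspace n u v, ∀ x ∈ Set.Icc a b, U i 1 x = dW a b (n-1-1) ψ x := by
    intro i hi
    have hmem : U i 1 ∈ Submodule.span ℝ {dW a b (n - 2) u, dW a b (n - 2) v} := by
      rcases Nat.le_one_iff_eq_zero_or_eq_one.mp hi with rfl | rfl
      · exact hU.base₀_mem
      · exact hU.base₁_mem
    obtain ⟨c₁, c₂, hc⟩ := Submodule.mem_span_pair.mp hmem
    refine ⟨fun x => c₁ * u x + c₂ * v x, ?_, ?_⟩
    · exact Submodule.add_mem _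
        (Submodule.smul_mem _ c₁ (Submodule.subset_span (Set.mem_insert _ _)))
        (Submodule.smul_mem _ c₂ (Submodule.subset_span
          (Set.mem_insert_of_mem _ (Set.mem_insert _ _))))
    · intro x hx
      have e : n - 1 - 1 = n - 2 := by omega
      rw [e]
      calc U i 1 x = c₁ * dW a b (n-2) u x + c₂ * dW a b (n-2) v x := by
            rw [← hc]; simp [smul_eq_mul]
        _ = dW a b (n-2) (fun t => c₁ * u t + c₂ * v t) x :=
            (dW_combo hab c₁ c₂ hu hv (by omega) x hx).symm
  intro i hi
  rcases Nat.le_one_iff_eq_zero_or_eq_one.mp hi with rfl | rfl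
  · refine ⟨hrep 0 (by omega), by simp [hU.base₀_a], by simp [hU.base₀_b],
      fun j hj => absurd hj (by omega), ?_, fun x hx => (hU.base_pos x hx).1, ?_⟩
    · intro j hj
      have : j = 0 := by omega
      subst this
      rw [dW_zero]; exact hU.base₀_b
    · intro _
      rw [dW_zero, hU.base₀_a]; norm_num
  · refine ⟨hrep 1 le_rfl, by simp [hU.base₁_a], by simp [hU.base₁_b], ?_,
      fun j hj => absurd hj (by omega), fun x hx => (hU.base_pos x hx).2,
      fun h => absurd h (lt_irrefl 1)⟩
    intro j hj
    have : j = 0 := by omega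
    subst this
    rw [dW_zero]; exact hU.base₁_a

lemma goodLevel_step {n : ℕ} {u v : ℝ → ℝ} {U : ℕ → ℕ → ℝ → ℝ} (hn : 3 ≤ n) (hab : a < b)
    (hu : ContDiffOn ℝ n u (Set.Icc a b)) (hv : ContDiffOn ℝ n v (Set.Icc a b))
    (hC1 : CondC1 n u v a b) (hU : Recur n u v a b U) {k : ℕ} (hk1 : 1 ≤ k)
    (hkn : k + 1 ≤ n - 1) (hG : GoodLevel n u v a b U k) : GoodLevel n u v a b U (k+1) := by
  have hD := uniqueDiffOn_Icc hab
  have haI : a ∈ Set.Icc a b := ⟨le_rfl, hab.le⟩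
  have hbI : b ∈ Set.Icc a b := ⟨hab.le, le_rfl⟩
  have hkn2 : k ≤ n - 2 := by omega
  have hUc := GoodLevel.contOn hab hu hv hG
  have hdp := GoodLevel.dIntPos hab hu hv hG
  have hII := GoodLevel.intInt hab hu hv hG
  have hposk : ∀ i ≤ k, ∀ x ∈ Set.Ioo a b, 0 < U i k x := fun i hi => (hG i hi).2.2.2.2.2.1
  have hVder : ∀ i ≤ k, ∀ x ∈ Set.Icc a b,
      HasDerivWithinAt (Vfun a b U i k) (U i k x / dInt a b U i k) (Set.Icc a b) x := by
    intro i hi x hx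
    exact FTC_Icc hab ((hUc i hi).div_const _) x hx
  have hVa : ∀ i : ℕ, Vfun a b U i k a = 0 := fun i => intervalIntegral.integral_same
  have hVb : ∀ i ≤ k, Vfun a b U i k b = 1 := by
    intro i hi
    show (∫ t in a..b, U i k t / dInt a b U i k) = 1
    rw [intervalIntegral.integral_div]
    exact div_self (ne_of_gt (hdp i hi))
  have hk2 : 2 ≤ k + 1 := by omega
  have hfun0 : U 0 (k+1) = fun s => 1 - Vfun a b U 0 k s := by
    funext s; have := hU.rec_zero (k+1) hk2 hkn s; simpa using this
  have hfunmid : ∀ i, 1 ≤ i → i ≤ k →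
      U i (k+1) = fun s => Vfun a b U (i-1) k s - Vfun a b U i k s := by
    intro i h1 h2; funext s
    have := hU.rec_mid (k+1) hk2 hkn i h1 (by omega) s; simpa using this
  have hfuntop : U (k+1) (k+1) = fun s => Vfun a b U k k s := by
    funext s; have := hU.rec_top (k+1) hk2 hkn s; simpa using this
  -- core construction
  have core : ∀ (F : ℝ → ℝ) (c₁ c₂ : ℝ) (i₁ i₂ : ℕ), i₁ ≤ k → i₂ ≤ k →
      (∀ x ∈ Set.Icc a b, HasDerivWithinAt F (c₁ * U i₁ k x + c₂ * U i₂ k x) (Set.Icc a b) x) →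
      (∃ ψ ∈ Pspace n u v, ∀ x ∈ Set.Icc a b, F x = dW a b (n-2-k) ψ x) ∧
      (∀ j ≤ k, ∀ x ∈ Set.Icc a b,
        dW a b (j+1) F x = c₁ * dW a b j (U i₁ k) x + c₂ * dW a b j (U i₂ k) x) := by
    intro F c₁ c₂ i₁ i₂ h₁ h₂ hF
    obtain ⟨ψ₁, hψ₁, hrep₁⟩ := (hG i₁ h₁).1
    obtain ⟨ψ₂, hψ₂, hrep₂⟩ := (hG i₂ h₂).1
    have hψ₁C := Pspace_smooth hab hu hv ψ₁ hψ₁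
    have hψ₂C := Pspace_smooth hab hu hv ψ₂ hψ₂
    have hcombo : ∀ j ≤ k, ∀ x ∈ Set.Icc a b,
        dW a b j (fun t => c₁ * U i₁ k t + c₂ * U i₂ k t) x
          = c₁ * dW a b j (U i₁ k) x + c₂ * dW a b j (U i₂ k) x := by
      intro j hj x hx
      have hs₁ : ContDiffOn ℝ j (dW a b (n-1-k) ψ₁) (Set.Icc a b) :=
        dW_contDiffOn hab hψ₁C (by omega)
      have hs₂ : ContDiffOn ℝ j (dW a b (n-1-k) ψ₂) (Set.Icc a b) :=
        dW_contDiffOn hab hψ₂C (by omega)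
      have e1 : dW a b j (fun t => c₁ * U i₁ k t + c₂ * U i₂ k t) x
          = dW a b j (fun t => c₁ * dW a b (n-1-k) ψ₁ t + c₂ * dW a b (n-1-k) ψ₂ t) x :=
        dW_congr hab (fun y hy => by rw [hrep₁ y hy, hrep₂ y hy]) j x hx
      rw [e1, dW_combo hab c₁ c₂ hs₁ hs₂ le_rfl x hx,
        ← dW_congr hab hrep₁ j x hx, ← dW_congr hab hrep₂ j x hx]
    constructor
    · set m := n - 2 - k with hmdef
      set G : ℝ → ℝ := fun t => c₁ * ψ₁ t + c₂ * ψ₂ t with hGdef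
      have hGP : G ∈ Pspace n u v :=
        Submodule.add_mem _ (Submodule.smul_mem _ c₁ hψ₁) (Submodule.smul_mem _ c₂ hψ₂)
      have hGC : ContDiffOn ℝ n G (Set.Icc a b) := Pspace_smooth hab hu hv G hGP
      have hWd : ∀ x ∈ Set.Icc a b, HasDerivWithinAt (dW a b m G)
          (c₁ * U i₁ k x + c₂ * U i₂ k x) (Set.Icc a b) x := by
        intro x hx
        have hdiff : DifferentiableWithinAt ℝ (dW a b m G) (Set.Icc a b) x :=
          (hGC.differentiableOn_iteratedDerivWithin
            (by exact_mod_cast (by omega : m < n)) hD) x hx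
        have h1 := hdiff.hasDerivWithinAt
        have e1 : derivWithin (dW a b m G) (Set.Icc a b) x = dW a b (m+1) G x :=
          (congrFun iteratedDerivWithin_succ x).symm
        have e2 : dW a b (m+1) G x = c₁ * dW a b (m+1) ψ₁ x + c₂ * dW a b (m+1) ψ₂ x :=
          dW_combo hab c₁ c₂ hψ₁C hψ₂C (by omega) x hx
        have e3 : c₁ * dW a b (m+1) ψ₁ x + c₂ * dW a b (m+1) ψ₂ x
            = c₁ * U i₁ k x + c₂ * U i₂ k x := by
          rw [show m + 1 = n - 1 - k by omega, ← hrep₁ x hx, ← hrep₂ x hx]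
        rw [e1, e2, e3] at h1
        exact h1
      have hsub : ∀ x ∈ Set.Icc a b,
          HasDerivWithinAt (fun t => F t - dW a b m G t) 0 (Set.Icc a b) x := by
        intro x hx
        have h2 := (hF x hx).sub (hWd x hx)
        simp only [sub_self] at h2; exact h2
      have hFc : ContinuousOn F (Set.Icc a b) :=
        fun x hx => ((hF x hx).differentiableWithinAt).continuousWithinAt
      have hWc : ContinuousOn (dW a b m G) (Set.Icc a b) :=
        hGC.continuousOn_iteratedDerivWithin (by exact_mod_cast (by omega : m ≤ n)) hD
      have hconst := const_of_hasDerivWithinAt_zero hab (hFc.sub hWc) hsub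
      refine ⟨fun t => G t + ((F a - dW a b m G a) / m.factorial) * t ^ m, ?_, ?_⟩
      · refine Submodule.add_mem _ hGP (Submodule.smul_mem _ _ (Submodule.subset_span ?_))
        exact Set.mem_insert_of_mem _ (Set.mem_insert_of_mem _ ⟨m, by omega, rfl⟩)
      · intro x hx
        have hpowC : ContDiffOn ℝ n (fun t : ℝ => t ^ m) (Set.Icc a b) :=
          ((contDiff_id (𝕜 := ℝ)).pow m).contDiffOn
        have e1 : dW a b m (fun t => G t + ((F a - dW a b m G a) / m.factorial) * t ^ m) x
            = dW a b m (fun t => 1 * G t + ((F a - dW a b m G a) / m.factorial) * t ^ m) x :=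
          dW_congr hab (fun y _ => by ring) m x hx
        have hfac : (m.factorial : ℝ) ≠ 0 := Nat.cast_ne_zero.mpr m.factorial_ne_zero
        rw [e1, dW_combo hab 1 ((F a - dW a b m G a) / m.factorial) hGC hpowC
          (by omega : m ≤ n) x hx, dW_pow hab m x hx, one_mul, div_mul_cancel₀ _ hfac]
        have h2 := hconst x hx
        simp only [Pi.sub_apply] at h2
        linarith
    · intro j hj x hx
      rw [dW_succ_fun hab F j x hx]
      have hdfun : ∀ y ∈ Set.Icc a b, derivWithin F (Set.Icc a b) y
          = (fun t => c₁ * U i₁ k t + c₂ * U i₂ k t) y :=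
        fun y hy => hasDerivWithinAt_derivWithin hab hy (hF y hy)
      rw [dW_congr hab hdfun j x hx]
      exact hcombo j hj x hx
  -- all basic components
  have hAll : ∀ i ≤ k+1,
      (∃ ψ ∈ Pspace n u v, ∀ x ∈ Set.Icc a b, U i (k+1) x = dW a b (n-2-k) ψ x) ∧
      (U i (k+1) a = if i = 0 then 1 else 0) ∧
      (U i (k+1) b = if i = k+1 then 1 else 0) ∧
      (∀ j < i, dW a b j (U i (k+1)) a = 0) ∧
      (∀ j, j + i + 1 ≤ k+1 → dW a b j (U i (k+1)) b = 0) := by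
    intro i hi
    by_cases hi0 : i = 0
    · subst hi0
      have hF : ∀ x ∈ Set.Icc a b, HasDerivWithinAt (U 0 (k+1))
          ((-(1 / dInt a b U 0 k)) * U 0 k x + 0 * U 0 k x) (Set.Icc a b) x := by
        intro x hx
        rw [hfun0]
        have h1 := (hVder 0 (by omega) x hx).const_sub 1
        have e : -(U 0 k x / dInt a b U 0 k)
            = (-(1 / dInt a b U 0 k)) * U 0 k x + 0 * U 0 k x := by ring
        rwa [e] at h1
      obtain ⟨hrep, hsplit⟩ := core _ _ _ 0 0 (by omega) (by omega) hF
      refine ⟨hrep, ?_, ?_, fun j hj => absurd hj (by omega), ?_⟩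
      · rw [hfun0, if_pos rfl]
        show 1 - Vfun a b U 0 k a = 1
        rw [hVa]; ring
      · rw [hfun0, if_neg (by omega)]
        show 1 - Vfun a b U 0 k b = 0
        rw [hVb 0 (by omega)]; ring
      · intro j hjcond
        rcases Nat.eq_zero_or_pos j with rfl | hjpos
        · rw [dW_zero, hfun0]
          show 1 - Vfun a b U 0 k b = 0
          rw [hVb 0 (by omega)]; ring
        · obtain ⟨j', rfl⟩ : ∃ j', j = j' + 1 := ⟨j - 1, by omega⟩
          rw [hsplit j' (by omega) b hbI, (hG 0 (by omega)).2.2.2.2.1 j' (by omega)]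
          ring
    · by_cases hitop : i = k+1
      · subst hitop
        have hF : ∀ x ∈ Set.Icc a b, HasDerivWithinAt (U (k+1) (k+1))
            ((1 / dInt a b U k k) * U k k x + 0 * U k k x) (Set.Icc a b) x := by
          intro x hx
          rw [hfuntop]
          have h1 := hVder k le_rfl x hx
          have e : U k k x / dInt a b U k k
              = (1 / dInt a b U k k) * U k k x + 0 * U k k x := by ring
          rwa [e] at h1
        obtain ⟨hrep, hsplit⟩ := core _ _ _ k k le_rfl le_rfl hF
        refine ⟨hrep, ?_, ?_, ?_, ?_⟩
        · rw [hfuntop, if_neg (by omega)]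
          show Vfun a b U k k a = 0
          exact hVa k
        · rw [hfuntop, if_pos rfl]
          exact hVb k le_rfl
        · intro j hj
          rcases Nat.eq_zero_or_pos j with rfl | hjpos
          · rw [dW_zero, hfuntop]
            exact hVa k
          · obtain ⟨j', rfl⟩ : ∃ j', j = j' + 1 := ⟨j - 1, by omega⟩
            rw [hsplit j' (by omega) a haI, (hG k le_rfl).2.2.2.1 j' (by omega)]
            ring
        · intro j hj
          exact absurd hj (by omega)
      · have h1i : 1 ≤ i := by omega
        have hik : i ≤ k := by omega
        have hF : ∀ x ∈ Set.Icc a b, HasDerivWithinAt (U i (k+1))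
            ((1 / dInt a b U (i-1) k) * U (i-1) k x
              + (-(1 / dInt a b U i k)) * U i k x) (Set.Icc a b) x := by
          intro x hx
          rw [hfunmid i h1i hik]
          have h1 := (hVder (i-1) (by omega) x hx).sub (hVder i hik x hx)
          have e : U (i-1) k x / dInt a b U (i-1) k - U i k x / dInt a b U i k
              = (1 / dInt a b U (i-1) k) * U (i-1) k x + (-(1 / dInt a b U i k)) * U i k x := by
            ring
          rwa [e] at h1
        obtain ⟨hrep, hsplit⟩ := core _ _ _ (i-1) i (by omega) hik hF
        refine ⟨hrep, ?_, ?_, ?_, ?_⟩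
        · rw [hfunmid i h1i hik, if_neg hi0]
          show Vfun a b U (i-1) k a - Vfun a b U i k a = 0
          rw [hVa, hVa]; ring
        · rw [hfunmid i h1i hik, if_neg hitop]
          show Vfun a b U (i-1) k b - Vfun a b U i k b = 0
          rw [hVb (i-1) (by omega), hVb i hik]; ring
        · intro j hj
          rcases Nat.eq_zero_or_pos j with rfl | hjpos
          · rw [dW_zero, hfunmid i h1i hik]
            show Vfun a b U (i-1) k a - Vfun a b U i k a = 0
            rw [hVa, hVa]; ring
          · obtain ⟨j', rfl⟩ : ∃ j', j = j' + 1 := ⟨j - 1, by omega⟩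
            rw [hsplit j' (by omega) a haI,
              (hG (i-1) (by omega)).2.2.2.1 j' (by omega),
              (hG i hik).2.2.2.1 j' (by omega)]
            ring
        · intro j hj
          rcases Nat.eq_zero_or_pos j with rfl | hjpos
          · rw [dW_zero, hfunmid i h1i hik]
            show Vfun a b U (i-1) k b - Vfun a b U i k b = 0
            rw [hVb (i-1) (by omega), hVb i hik]; ring
          · obtain ⟨j', rfl⟩ : ∃ j', j = j' + 1 := ⟨j - 1, by omega⟩
            rw [hsplit j' (by omega) b hbI,
              (hG (i-1) (by omega)).2.2.2.2.1 j' (by omega),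
              (hG i hik).2.2.2.2.1 j' (by omega)]
            ring
  -- translation of derivatives through the representation
  have htrans : ∀ i ≤ k+1, ∀ ψ, (∀ x ∈ Set.Icc a b, U i (k+1) x = dW a b (n-2-k) ψ x) →
      ∀ j : ℕ, ∀ x ∈ Set.Icc a b, dW a b (n-2-k+j) ψ x = dW a b j (U i (k+1)) x := by
    intro i hi ψ hrep j x hx
    calc dW a b (n-2-k+j) ψ x = dW a b (j+(n-2-k)) ψ x := by rw [Nat.add_comm]
      _ = dW a b j (dW a b (n-2-k) ψ) x := (dW_comp hab ψ j (n-2-k) x hx).symm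
      _ = dW a b j (U i (k+1)) x := (dW_congr hab hrep j x hx).symm
  -- positivity
  have hpos1 : ∀ i ≤ k+1, ∀ x ∈ Set.Ioo a b, 0 < U i (k+1) x := by
    intro i hi
    by_cases hi0 : i = 0
    · subst hi0
      intro s0 hs0
      rw [hfun0]
      show 0 < 1 - Vfun a b U 0 k s0
      have hs0I : s0 ∈ Set.Icc a b := Set.Ioo_subset_Icc_self hs0
      have int1 := hII 0 (by omega) a s0 haI hs0I hs0.1.le
      have int2 := hII 0 (by omega) s0 b hs0I hbI hs0.2.le
      have hsum := intervalIntegral.integral_add_adjacent_intervals int1 int2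
      have h2 : 0 < ∫ t in s0..b, U 0 k t / dInt a b U 0 k :=
        intervalIntegral_pos_of_pos_on int2
          (fun x hx => div_pos (hposk 0 (by omega) x ⟨hs0.1.trans hx.1, hx.2⟩)
            (hdp 0 (by omega))) hs0.2
      have hVbval := hVb 0 (by omega)
      have hVs : Vfun a b U 0 k s0 = ∫ t in a..s0, U 0 k t / dInt a b U 0 k := rfl
      have hVbval' : (∫ t in a..b, U 0 k t / dInt a b U 0 k) = 1 := hVbval
      rw [hVs, ← hVbval', ← hsum]
      linarith
    · by_cases hitop : i = k+1
      · subst hitop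
        intro s0 hs0
        rw [hfuntop]
        show 0 < ∫ t in a..s0, U k k t / dInt a b U k k
        exact intervalIntegral_pos_of_pos_on
          (hII k le_rfl a s0 haI (Set.Ioo_subset_Icc_self hs0) hs0.1.le)
          (fun x hx => div_pos (hposk k le_rfl x ⟨hx.1, hx.2.trans hs0.2⟩) (hdp k le_rfl))
          hs0.1
      · have h1i : 1 ≤ i := by omega
        have hik : i ≤ k := by omega
        obtain ⟨hrepEx, hvala, hvalb, hca, hcb⟩ := hAll i hi
        obtain ⟨ψ', hψ', hrep⟩ := hrepEx
        have hψ'C := Pspace_smooth hab hu hv ψ' hψ'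
        have hsm : ContDiffOn ℝ (i+1) (U i (k+1)) (Set.Icc a b) :=
          (dW_contDiffOn hab hψ'C (by omega : (n-2-k) + (i+1) ≤ n)).congr hrep
        have hF : ∀ x ∈ Set.Icc a b, HasDerivWithinAt (U i (k+1))
            ((1 / dInt a b U (i-1) k) * U (i-1) k x
              + (-(1 / dInt a b U i k)) * U i k x) (Set.Icc a b) x := by
          intro x hx
          rw [hfunmid i h1i hik]
          have h1 := (hVder (i-1) (by omega) x hx).sub (hVder i hik x hx)
          have e : U (i-1) k x / dInt a b U (i-1) k - U i k x / dInt a b U i k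
              = (1 / dInt a b U (i-1) k) * U (i-1) k x + (-(1 / dInt a b U i k)) * U i k x := by
            ring
          rwa [e] at h1
        obtain ⟨_, hsplit⟩ := core _ _ _ (i-1) i (by omega) hik hF
        have hder_pos : 0 < dW a b i (U i (k+1)) a := by
          have e : i - 1 + 1 = i := by omega
          have h2 := hsplit (i-1) (by omega) a haI
          rw [e] at h2
          rw [h2, (hG i hik).2.2.2.1 (i-1) (by omega), mul_zero, add_zero]
          exact mul_pos (one_div_pos.mpr (hdp (i-1) (by omega))) ((hG (i-1) (by omega)).2.2.2.2.2.2 (by omega))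
        by_contra hcon
        push_neg at hcon
        obtain ⟨s0, hs0, hle⟩ := hcon
        obtain ⟨δ, hδ0, hδb, hδpos⟩ := sign_near_left hab i (U i (k+1)) hsm hca hder_pos
        by_cases hcase : s0 ≤ a + δ
        · exact absurd (hδpos s0 ⟨hs0.1, hcase⟩) (by linarith)
        · push_neg at hcase
          have hx0I : a + δ ∈ Set.Icc a b := ⟨by linarith, hδb⟩
          have hx0pos : 0 < U i (k+1) (a + δ) := hδpos (a + δ) ⟨by linarith, le_rfl⟩
          have hcsub : ContinuousOn (U i (k+1)) (Set.Icc (a+δ) s0) :=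
            hsm.continuousOn.mono (Set.Icc_subset_Icc hx0I.1 hs0.2.le)
          obtain ⟨z, hzmem, hz0⟩ := intermediate_value_Icc' hcase.le hcsub
            (Set.mem_Icc.mpr ⟨hle, hx0pos.le⟩)
          have hzIoo : z ∈ Set.Ioo a b :=
            ⟨lt_of_lt_of_le (by linarith) hzmem.1, lt_of_le_of_lt hzmem.2 hs0.2⟩
          have hDp := Dprime hab hu hv hC1 k (by omega) ψ' hψ' i (k+1-i) {z}
            (by omega) (by omega)
            (by
              intro y hy
              rw [Finset.coe_singleton, Set.mem_singleton_iff] at hy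
              rw [hy]; exact hzIoo)
            (by
              intro y hy
              rw [Finset.mem_singleton] at hy
              subst hy
              have h1 : dW a b (n-2-k) ψ' y = dW a b 0 (U i (k+1)) y :=
                htrans i hi ψ' hrep 0 y (Set.Ioo_subset_Icc_self hzIoo)
              rw [h1, dW_zero]
              exact hz0)
            (fun j hj => by
              rw [htrans i hi ψ' hrep j a haI]; exact hca j (by omega))
            (fun j hj => by
              rw [htrans i hi ψ' hrep j b hbI]; exact hcb j (by omega))
            (by rw [Finset.card_singleton]; omega)
          have hz2 := hDp (a+δ) hx0I
          have h3 : dW a b (n-2-k) ψ' (a+δ) = dW a b 0 (U i (k+1)) (a+δ) :=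
            htrans i hi ψ' hrep 0 (a+δ) hx0I
          rw [h3, dW_zero] at hz2
          linarith
  -- first nonvanishing derivative at a
  have hfpos1 : ∀ i, i < k+1 → 0 < dW a b i (U i (k+1)) a := by
    intro i hik1
    have hi : i ≤ k + 1 := by omega
    obtain ⟨hrepEx, hvala, hvalb, hca, hcb⟩ := hAll i hi
    rcases Nat.eq_zero_or_pos i with rfl | hipos
    · rw [dW_zero, hvala, if_pos rfl]; norm_num
    · obtain ⟨ψ', hψ', hrep⟩ := hrepEx
      have hψ'C := Pspace_smooth hab hu hv ψ' hψ'
      have hsm : ContDiffOn ℝ (i+1) (U i (k+1)) (Set.Icc a b) :=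
        (dW_contDiffOn hab hψ'C (by omega : (n-2-k) + (i+1) ≤ n)).congr hrep
      have hnn : ∀ x ∈ Set.Icc a b, 0 ≤ U i (k+1) x := by
        intro x hx
        rcases eq_or_lt_of_le hx.1 with heq | hax
        · rw [← heq, hvala]; split_ifs <;> norm_num
        · rcases eq_or_lt_of_le hx.2 with heq | hxb
          · rw [heq, hvalb]; split_ifs <;> norm_num
          · exact (hpos1 i hi x ⟨hax, hxb⟩).le
      have hge := dW_nonneg_left hab hsm hca hnn
      rcases eq_or_lt_of_le hge with heq | hlt
      · exfalso
        have hDp := Dprime hab hu hv hC1 k (by omega) ψ' hψ' (i+1) (k+1-i) (∅ : Finset ℝ)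
          (by omega) (by omega) (by simp)
          (by intro y hy; simp at hy)
          (fun j hj => by
            rw [htrans i hi ψ' hrep j a haI]
            by_cases h : j < i
            · exact hca j h
            · have : j = i := by omega
              rw [this]; exact heq.symm)
          (fun j hj => by
            rw [htrans i hi ψ' hrep j b hbI]; exact hcb j (by omega))
          (by rw [Finset.card_empty]; omega)
        have hmid : (a+b)/2 ∈ Set.Ioo a b := ⟨by linarith, by linarith⟩
        have h1 := hDp ((a+b)/2) (Set.Ioo_subset_Icc_self hmid)
        have h2 : dW a b (n-2-k) ψ' ((a+b)/2) = dW a b 0 (U i (k+1)) ((a+b)/2) :=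
          htrans i hi ψ' hrep 0 _ (Set.Ioo_subset_Icc_self hmid)
        rw [h2, dW_zero] at h1
        have h3 := hpos1 i hi ((a+b)/2) hmid
        linarith
      · exact hlt
  -- assemble
  intro i hi
  obtain ⟨hrepEx, hvala, hvalb, hca, hcb⟩ := hAll i hi
  refine ⟨?_, hvala, hvalb, hca, hcb, hpos1 i hi, hfpos1 i⟩
  obtain ⟨ψ, hψ, hrep⟩ := hrepEx
  refine ⟨ψ, hψ, ?_⟩
  have e : n - 1 - (k+1) = n - 2 - k := by omega
  rw [e]
  exact hrep

lemma goodLevel_master {n : ℕ} {u v : ℝ → ℝ} {U : ℕ → ℕ → ℝ → ℝ} (hn : 3 ≤ n) (hab : a < b)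
    (hu : ContDiffOn ℝ n u (Set.Icc a b)) (hv : ContDiffOn ℝ n v (Set.Icc a b))
    (hC1 : CondC1 n u v a b) (hU : Recur n u v a b U) :
    ∀ k, 1 ≤ k → k ≤ n - 1 → GoodLevel n u v a b U k := by
  intro k
  induction k with
  | zero => intro h; exact absurd h (by omega)
  | succ k ih =>
    intro _ hk
    rcases Nat.eq_zero_or_pos k with rfl | hk1
    · exact goodLevel_one hn hab hu hv hU
    · exact goodLevel_step hn hab hu hv hC1 hU hk1 hk (ih (by omega) (by omega))

end Helpers

/-- Vanishing of derivatives of `U_{i,k,n-1}` at the endpoints: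
`U_{i,k,n-1}^(j)(a) = 0` for `j = 0, ..., i-1` and `U_{i,k,n-1}^(j)(b) = 0` for
`j = 0, ..., k-i-1`; in particular for `B_{i,n-1} := U_{i,n-1,n-1}`:
`B_{i,n-1}^(j)(a) = 0` for `j = 0, ..., i-1` and `B_{i,n-1}^(j)(b) = 0` for
`j = 0, ..., n-i-2`. -/
theorem statement3 (n : ℕ) (hn : 3 ≤ n) (a b : ℝ) (hab : a < b) (u v : ℝ → ℝ)
    (hu : ContDiffOn ℝ n u (Set.Icc a b)) (hv : ContDiffOn ℝ n v (Set.Icc a b))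
    (hdim : dimP n u v a b = n) (hC1 : CondC1 n u v a b)
    (U : ℕ → ℕ → ℝ → ℝ) (hU : Recur n u v a b U) :
    (∀ k, 2 ≤ k → k ≤ n - 1 → ∀ i ≤ k,
      (∀ j < i, dW a b j (U i k) a = 0) ∧
      (∀ j, j + i + 1 ≤ k → dW a b j (U i k) b = 0)) ∧
    (∀ i ≤ n - 1,
      (∀ j < i, dW a b j (U i (n - 1)) a = 0) ∧
      (∀ j, j + i + 2 ≤ n → dW a b j (U i (n - 1)) b = 0)) := by
  have hmaster := goodLevel_master hn hab hu hv hC1 hU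
  constructor
  · intro k hk2 hkn i hik
    have hG := hmaster k (by omega) hkn
    exact ⟨(hG i hik).2.2.2.1, fun j hj => (hG i hik).2.2.2.2.1 j hj⟩
  · intro i hi
    have hG := hmaster (n-1) (by omega) le_rfl
    exact ⟨(hG i hi).2.2.2.1, fun j hj => (hG i hi).2.2.2.2.1 j (by omega)⟩
end
end

section
/- Let r₁, r₂ ≥ 0 and n₁ > r₁, n₂ > r₂ be integers. Let B₀, ..., B_{n₁-1} be C^{r₁} functions on an interval containing the point a, satisfying B_i^{(h)}(a) = 0 for all h < i and B_i^{(i)}(a) ≠ 0 (for each i with i ≤ r₁), and let C₀, ..., C_{n₂-1} be C^{r₂} functions on an interval containing the point c, satisfying C_j^{(k)}(c) = 0 for all k < j and C_j^{(j)}(c) ≠ 0 (for each j with j ≤ r₂). Then the linear map sending a coefficient array (c_{ij})_{0 ≤ i ≤ r₁, 0 ≤ j ≤ r₂} to the array of partial derivatives (D_s^h D_t^k p(a,c))_{0 ≤ h ≤ r₁, 0 ≤ k ≤ r₂} of p(s,t) := Σ_{i=0}^{r₁} Σ_{j=0}^{r₂} c_{ij} B_i(s) C_j(t) is a linear bijection;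 in particular, for any prescribed values of the mixed partial derivatives D_s^h D_t^k at (a,c) with 0 ≤ h ≤ r₁ and 0 ≤ k ≤ r₂, the coefficients (c_{ij}) are uniquely determined. -/
noncomputable section

/-- Iterated derivative of a finite sum. -/
lemma itd_sum {ι : Type*} (u : Finset ι) (n : ℕ) (f : ι → ℝ → ℝ)
    (hf : ∀ i ∈ u, ContDiff ℝ n (f i)) (x : ℝ) :
    iteratedDeriv n (fun t => ∑ i ∈ u, f i t) x = ∑ i ∈ u, iteratedDeriv n (f i) x := by
  simp only [iteratedDeriv_eq_iteratedFDeriv]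
  rw [iteratedFDeriv_sum hf]
  simp [Finset.sum_apply]

/-- Iterated derivative of a constant multiple. -/
lemma itd_cmul (n : ℕ) (c : ℝ) {f : ℝ → ℝ} (hf : ContDiff ℝ n f) (x : ℝ) :
    iteratedDeriv n (fun z => c * f z) x = c * iteratedDeriv n f x := by
  simp only [← iteratedDerivWithin_univ]
  exact iteratedDerivWithin_const_mul (Set.mem_univ x) uniqueDiffOn_univ c hf.contDiffWithinAt

/-- The mixed partial derivative `D_s^h D_t^k p (a, c)` of a function of two real
variables. -/
def mixedPartial (h k : ℕ) (p : ℝ → ℝ → ℝ) (a c : ℝ) : ℝ :=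
  iteratedDeriv h (fun s => iteratedDeriv k (fun t => p s t) c) a

/-- The corner linear system: the map from tensor-product coefficients
`(c_{ij})_{i ≤ r₁, j ≤ r₂}` to the mixed partial derivatives
`(D_s^h D_t^k p(a,c))_{h ≤ r₁, k ≤ r₂}` of `p(s,t) = Σᵢⱼ c_{ij} Bᵢ(s) Cⱼ(t)` is a linear
bijection; in particular the coefficients are uniquely determined by any prescribed
values of these mixed partial derivatives. -/
theorem statement5 (r₁ r₂ n₁ n₂ : ℕ) (hn₁ : r₁ < n₁) (hn₂ : r₂ < n₂) (a c : ℝ)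
    (B C : ℕ → ℝ → ℝ)
    (hB : ∀ i < n₁, ContDiff ℝ r₁ (B i))
    (hC : ∀ j < n₂, ContDiff ℝ r₂ (C j))
    (hBa : ∀ i ≤ r₁, (∀ h < i, iteratedDeriv h (B i) a = 0) ∧ iteratedDeriv i (B i) a ≠ 0)
    (hCc : ∀ j ≤ r₂, (∀ k < j, iteratedDeriv k (C j) c = 0) ∧ iteratedDeriv j (C j) c ≠ 0) :
    (Function.Bijective
      (fun (cf : Fin (r₁ + 1) → Fin (r₂ + 1) → ℝ) (h : Fin (r₁ + 1)) (k : Fin (r₂ + 1)) =>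
        mixedPartial h.1 k.1
          (fun s t => ∑ i : Fin (r₁ + 1), ∑ j : Fin (r₂ + 1), cf i j * B i.1 s * C j.1 t)
          a c)) ∧
    (∀ d : Fin (r₁ + 1) → Fin (r₂ + 1) → ℝ,
      ∃! cf : Fin (r₁ + 1) → Fin (r₂ + 1) → ℝ,
        ∀ (h : Fin (r₁ + 1)) (k : Fin (r₂ + 1)),
          mixedPartial h.1 k.1
            (fun s t => ∑ i : Fin (r₁ + 1), ∑ j : Fin (r₂ + 1), cf i j * B i.1 s * C j.1 t)
            a c = d h k) := by
  set M : Matrix (Fin (r₁ + 1)) (Fin (r₁ + 1)) ℝ :=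
    fun h i => iteratedDeriv h.1 (B i.1) a with hM
  set N : Matrix (Fin (r₂ + 1)) (Fin (r₂ + 1)) ℝ :=
    fun k j => iteratedDeriv k.1 (C j.1) c with hN
  -- the key computation of the mixed partials
  have key : ∀ (cf : Fin (r₁ + 1) → Fin (r₂ + 1) → ℝ) (h : Fin (r₁ + 1)) (k : Fin (r₂ + 1)),
      mixedPartial h.1 k.1
        (fun s t => ∑ i : Fin (r₁ + 1), ∑ j : Fin (r₂ + 1), cf i j * B i.1 s * C j.1 t) a c
      = ∑ i : Fin (r₁ + 1), ∑ j : Fin (r₂ + 1), cf i j * M h i * N k j := by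
    intro cf h k
    have hBk : ∀ i : Fin (r₁ + 1), ContDiff ℝ h.1 (B i.1) := fun i =>
      (hB i.1 (lt_of_le_of_lt (Nat.lt_succ_iff.mp i.2) hn₁)).of_le
        (by exact_mod_cast Nat.lt_succ_iff.mp h.2)
    have hCk : ∀ j : Fin (r₂ + 1), ContDiff ℝ k.1 (C j.1) := fun j =>
      (hC j.1 (lt_of_le_of_lt (Nat.lt_succ_iff.mp j.2) hn₂)).of_le
        (by exact_mod_cast Nat.lt_succ_iff.mp k.2)
    unfold mixedPartial
    have h1 : (fun s => iteratedDeriv k.1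
        (fun t => ∑ i : Fin (r₁ + 1), ∑ j : Fin (r₂ + 1), cf i j * B i.1 s * C j.1 t) c)
        = fun s => ∑ i : Fin (r₁ + 1), ∑ j : Fin (r₂ + 1),
            (cf i j * N k j) * B i.1 s := by
      funext s
      rw [itd_sum Finset.univ k.1 _
        (fun i _ => ContDiff.sum fun j _ => contDiff_const.mul (hCk j)) c]
      refine Finset.sum_congr rfl fun i _ => ?_
      rw [itd_sum Finset.univ k.1 _ (fun j _ => contDiff_const.mul (hCk j)) c]
      refine Finset.sum_congr rfl fun j _ => ?_
      rw [itd_cmul k.1 _ (hCk j) c, hN]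
      ring
    rw [h1, itd_sum Finset.univ h.1 _
      (fun i _ => ContDiff.sum fun j _ => contDiff_const.mul (hBk i)) a]
    refine Finset.sum_congr rfl fun i _ => ?_
    rw [itd_sum Finset.univ h.1 _ (fun j _ => contDiff_const.mul (hBk i)) a]
    refine Finset.sum_congr rfl fun j _ => ?_
    rw [itd_cmul h.1 _ (hBk i) a, hM]
    ring
  -- the map is matrix multiplication `cf ↦ M * cf * Nᵀ`
  have hF : (fun (cf : Fin (r₁ + 1) → Fin (r₂ + 1) → ℝ) (h : Fin (r₁ + 1)) (k : Fin (r₂ + 1)) =>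
      mixedPartial h.1 k.1
        (fun s t => ∑ i : Fin (r₁ + 1), ∑ j : Fin (r₂ + 1), cf i j * B i.1 s * C j.1 t) a c)
      = fun cf : Matrix (Fin (r₁ + 1)) (Fin (r₂ + 1)) ℝ => M * cf * N.transpose := by
    funext cf h k
    rw [key cf h k]
    simp only [Matrix.mul_apply, Matrix.transpose_apply, Finset.sum_mul]
    rw [Finset.sum_comm]
    refine Finset.sum_congr rfl fun i _ => by
      show ∑ x, cf x i * M h x * N k i = (∑ x, M h x * cf x i) * N k i
      rw [Finset.sum_mul]
      exact Finset.sum_congr rfl fun j _ => by ring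
  -- triangularity and invertibility
  have hMdet : IsUnit M.det := by
    rw [Matrix.det_of_lowerTriangular M (fun h i hi => (hBa i.1 (Nat.lt_succ_iff.mp i.2)).1
      h.1 hi)]
    exact isUnit_iff_ne_zero.mpr (Finset.prod_ne_zero_iff.mpr
      fun i _ => (hBa i.1 (Nat.lt_succ_iff.mp i.2)).2)
  have hNdet : IsUnit N.transpose.det := by
    rw [Matrix.det_transpose]
    rw [Matrix.det_of_lowerTriangular N (fun k j hj => (hCc j.1 (Nat.lt_succ_iff.mp j.2)).1
      k.1 hj)]
    exact isUnit_iff_ne_zero.mpr (Finset.prod_ne_zero_iff.mpr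
      fun j _ => (hCc j.1 (Nat.lt_succ_iff.mp j.2)).2)
  have hbij : Function.Bijective
      (fun cf : Matrix (Fin (r₁ + 1)) (Fin (r₂ + 1)) ℝ => M * cf * N.transpose) := by
    rw [Function.bijective_iff_has_inverse]
    refine ⟨fun d => M⁻¹ * d * N.transpose⁻¹, fun cf => ?_, fun d => ?_⟩
    · show M⁻¹ * (M * cf * N.transpose) * N.transpose⁻¹ = cf
      rw [Matrix.mul_assoc M cf, ← Matrix.mul_assoc M⁻¹ M,
        Matrix.nonsing_inv_mul M hMdet, Matrix.one_mul, Matrix.mul_assoc,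
        Matrix.mul_nonsing_inv _ hNdet, Matrix.mul_one]
    · show M * (M⁻¹ * d * N.transpose⁻¹) * N.transpose = d
      rw [← Matrix.mul_assoc M, ← Matrix.mul_assoc M, Matrix.mul_nonsing_inv M hMdet,
        Matrix.one_mul, Matrix.mul_assoc, Matrix.nonsing_inv_mul _ hNdet, Matrix.mul_one]
  have hbij' := hF ▸ hbij
  refine ⟨hbij', fun d => ?_⟩
  obtain ⟨cf, hcf⟩ := hbij'.2 d
  refine ⟨cf, fun h k => congrFun (congrFun hcf h) k, fun y hy => hbij'.1 ?_⟩
  rw [hcf]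
  funext h k
  exact hy h k
end
end

section
/- Let n ≥ 3, let α, β be real numbers with β > 0, and set u(s) = e^{α s} cos(β s), v(s) = e^{α s} sin(β s) on [a,b]. Then the space P^n_{u,v}([a,b]) satisfies condition (C2) for any interval [a,b]; moreover, if β(b − a) < π, then it also satisfies condition (C1). -/
open Set

noncomputable section

namespace Statement13Aux

/-- Evaluation of polynomials, as a linear map to functions. -/
def evalLM : Polynomial ℝ →ₗ[ℝ] (ℝ → ℝ) where
  toFun p := fun s => p.eval s
  map_add' p q := by funext s; simp
  map_smul' c p := by funext s; simp

lemma contDiff_poly (p : Polynomial ℝ) : ContDiff ℝ (⊤ : ℕ∞) fun s : ℝ => p.eval s := by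
  induction p using Polynomial.induction_on' with
  | add p q hp hq => simpa [Polynomial.eval_add] using hp.add hq
  | monomial i c =>
      simpa [Polynomial.eval_monomial] using (contDiff_const.mul (contDiff_id.pow i) :
        ContDiff ℝ (⊤ : ℕ∞) fun s : ℝ => c * s ^ i)

lemma iteratedDeriv_poly (k : ℕ) (p : Polynomial ℝ) :
    iteratedDeriv k (fun s : ℝ => p.eval s)
      = fun s => (Polynomial.derivative^[k] p).eval s := by
  induction k generalizing p with
  | zero => simp
  | succ k ih =>
    rw [iteratedDeriv_succ']
    have hd : (deriv fun s : ℝ => p.eval s) = fun s => p.derivative.eval s := by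
      funext s; exact p.deriv
    rw [hd, ih, Function.iterate_succ_apply]

lemma hasDerivAt_cexp_re (c l : ℂ) (s : ℝ) :
    HasDerivAt (fun t : ℝ => (c * Complex.exp (l * t)).re)
      ((c * l * Complex.exp (l * s)).re) s := by
  have h0 : HasDerivAt (fun t : ℝ => l * (t : ℂ)) l s := by
    simpa using (Complex.ofRealCLM.hasDerivAt (x := s)).const_mul l
  have h1 := (h0.cexp).const_mul c
  have h2 := Complex.reCLM.hasFDerivAt.comp_hasDerivAt s h1
  have h3 : (c * l * Complex.exp (l * s)).re
      = Complex.reCLM (c * (Complex.exp (l * s) * l)) := by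
    simp only [Complex.reCLM_apply]
    congr 1
    ring
  rw [h3]
  exact h2

lemma contDiff_cexp_re (c l : ℂ) :
    ContDiff ℝ (⊤ : ℕ∞) fun t : ℝ => (c * Complex.exp (l * t)).re := by
  have h : ContDiff ℝ (⊤ : ℕ∞) fun t : ℝ => l * (t : ℂ) :=
    contDiff_const.mul Complex.ofRealCLM.contDiff
  exact Complex.reCLM.contDiff.comp (contDiff_const.mul h.cexp)

lemma iteratedDeriv_cexp_re (k : ℕ) (c l : ℂ) :
    iteratedDeriv k (fun t : ℝ => (c * Complex.exp (l * t)).re)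
      = fun t : ℝ => (c * l ^ k * Complex.exp (l * t)).re := by
  induction k generalizing c with
  | zero => simp
  | succ k ih =>
    rw [iteratedDeriv_succ']
    have hd : (deriv fun t : ℝ => (c * Complex.exp (l * t)).re)
        = fun t : ℝ => ((c * l) * Complex.exp (l * t)).re := by
      funext t; exact (hasDerivAt_cexp_re c l t).deriv
    rw [hd, ih (c * l)]
    funext t
    congr 1
    ring

lemma itderivWithin_eq (k : ℕ) {f : ℝ → ℝ} (hf : ContDiff ℝ (⊤ : ℕ∞) f) {s : Set ℝ}
    (hs : UniqueDiffOn ℝ s) {x : ℝ} (hx : x ∈ s) :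
    iteratedDerivWithin k f s x = iteratedDeriv k f x := by
  have H := contDiff_iff_ftaylorSeries.mp hf
  have h1 := (H.hasFTaylorSeriesUpToOn s).eq_iteratedFDerivWithin_of_uniqueDiffOn
      (m := k) (by exact_mod_cast le_top) hs hx
  have h2 := H.eq_iteratedFDeriv (m := k) (by exact_mod_cast le_top) x
  rw [iteratedDerivWithin, iteratedDeriv, ← h1, ← h2]

lemma iteratedDeriv_add' (k : ℕ) {f g : ℝ → ℝ} (hf : ContDiff ℝ (⊤ : ℕ∞) f)
    (hg : ContDiff ℝ (⊤ : ℕ∞) g) :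
    iteratedDeriv k (fun t => f t + g t)
      = fun t => iteratedDeriv k f t + iteratedDeriv k g t := by
  funext t
  rw [← iteratedDerivWithin_univ, ← iteratedDerivWithin_univ, ← iteratedDerivWithin_univ]
  have hfk : ContDiffOn ℝ k f Set.univ := (hf.of_le (by exact_mod_cast le_top)).contDiffOn
  have hgk : ContDiffOn ℝ k g Set.univ := (hg.of_le (by exact_mod_cast le_top)).contDiffOn
  have := iteratedDerivWithin_add (Set.mem_univ t) uniqueDiffOn_univ (hfk t (Set.mem_univ t)) (hgk t (Set.mem_univ t))
  simpa [Pi.add_def] using this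

lemma key (n : ℕ) (hn : 3 ≤ n) (a b : ℝ) (hab : a < b) (α β : ℝ) {ψ : ℝ → ℝ}
    (hψ : ψ ∈ Pspace n (fun s : ℝ => Real.exp (α * s) * Real.cos (β * s))
      (fun s : ℝ => Real.exp (α * s) * Real.sin (β * s))) :
    ∃ d : ℂ,
      (∀ s ∈ Set.Icc a b,
        dW a b (n - 2) ψ s = (d * Complex.exp (((α : ℂ) + β * Complex.I) * s)).re) ∧
      (∀ s ∈ Set.Icc a b,
        dW a b (n - 1) ψ s
          = (d * ((α : ℂ) + β * Complex.I)
              * Complex.exp (((α : ℂ) + β * Complex.I) * s)).re) := by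
  set l : ℂ := (α : ℂ) + β * Complex.I with hl
  unfold Pspace genSet at hψ
  rcases Submodule.mem_span_insert.mp hψ with ⟨c₁, z, hz, rfl⟩
  rcases Submodule.mem_span_insert.mp hz with ⟨c₂, w, hw, rfl⟩
  -- the remaining part is a polynomial of degree < n - 2
  have hwp : ∃ p : Polynomial ℝ, p.natDegree < n - 2 ∧ w = fun s : ℝ => p.eval s := by
    have hsub : Submodule.span ℝ {f : ℝ → ℝ | ∃ i : ℕ, i + 3 ≤ n ∧ f = fun s : ℝ => s ^ i}
        ≤ (Polynomial.degreeLT ℝ (n - 2)).map evalLM := by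
      rw [Submodule.span_le]
      rintro f ⟨i, hi, rfl⟩
      have hmem : (Polynomial.X ^ i : Polynomial ℝ) ∈ Polynomial.degreeLT ℝ (n - 2) := by
        rw [Polynomial.mem_degreeLT, Polynomial.degree_X_pow]
        exact_mod_cast (by omega : i < n - 2)
      have heval : evalLM (Polynomial.X ^ i) = fun s : ℝ => s ^ i := by
        funext s; simp [evalLM]
      exact heval ▸ Submodule.mem_map_of_mem hmem
    rcases hsub hw with ⟨p, hp, rfl⟩
    refine ⟨p, ?_, rfl⟩
    rcases eq_or_ne p 0 with rfl | hp0
    · simpa using (by omega : 0 < n - 2)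
    · exact (Polynomial.natDegree_lt_iff_degree_lt hp0).mpr (Polynomial.mem_degreeLT.mp hp)
  obtain ⟨p, hpd, rfl⟩ := hwp
  set e : ℂ := (c₁ : ℂ) - c₂ * Complex.I with he
  have hre : ∀ t : ℝ, (Complex.exp (l * t)).re = Real.exp (α * t) * Real.cos (β * t) := by
    intro t
    rw [Complex.exp_re]
    have h1 : (l * (t : ℂ)).re = α * t := by simp [hl, Complex.mul_re]
    have h2 : (l * (t : ℂ)).im = β * t := by simp [hl, Complex.mul_im]
    rw [h1, h2]
  have him : ∀ t : ℝ, (Complex.exp (l * t)).im = Real.exp (α * t) * Real.sin (β * t) := by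
    intro t
    rw [Complex.exp_im]
    have h1 : (l * (t : ℂ)).re = α * t := by simp [hl, Complex.mul_re]
    have h2 : (l * (t : ℂ)).im = β * t := by simp [hl, Complex.mul_im]
    rw [h1, h2]
  have hfun : (c₁ • (fun s : ℝ => Real.exp (α * s) * Real.cos (β * s))
        + (c₂ • (fun s : ℝ => Real.exp (α * s) * Real.sin (β * s))
            + fun s : ℝ => p.eval s))
      = fun t : ℝ => (e * Complex.exp (l * t)).re + p.eval t := by
    funext t
    simp only [Pi.add_apply, Pi.smul_apply, smul_eq_mul]
    rw [Complex.mul_re, hre, him]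
    have h1 : e.re = c₁ := by simp [he]
    have h2 : e.im = -c₂ := by simp [he]
    rw [h1, h2]
    ring
  have main : ∀ k : ℕ, p.natDegree < k → ∀ s ∈ Set.Icc a b,
      dW a b k (c₁ • (fun s : ℝ => Real.exp (α * s) * Real.cos (β * s))
        + (c₂ • (fun s : ℝ => Real.exp (α * s) * Real.sin (β * s))
            + fun s : ℝ => p.eval s)) s
      = (e * l ^ k * Complex.exp (l * s)).re := by
    intro k hk s hs
    have hFc : ContDiff ℝ (⊤ : ℕ∞)
        fun t : ℝ => (e * Complex.exp (l * t)).re + p.eval t :=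
      (contDiff_cexp_re e l).add (contDiff_poly p)
    rw [dW, hfun, itderivWithin_eq k hFc (uniqueDiffOn_Icc hab) hs,
      iteratedDeriv_add' k (contDiff_cexp_re e l) (contDiff_poly p),
      iteratedDeriv_cexp_re, iteratedDeriv_poly,
      Polynomial.iterate_derivative_eq_zero hk]
    simp
  refine ⟨e * l ^ (n - 2), ?_, ?_⟩
  · intro s hs
    rw [main (n - 2) hpd s hs]
  · intro s hs
    rw [main (n - 1) (by omega) s hs]
    congr 1
    rw [show n - 1 = (n - 2) + 1 by omega, pow_succ]
    ring

end Statement13Aux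

open Statement13Aux in
/-- For `u(s) = e^{αs} cos(βs)`, `v(s) = e^{αs} sin(βs)` with `β > 0`,
the space `P^n_{u,v}([a,b])` satisfies condition (C2) for any interval `[a,b]`, and it
also satisfies condition (C1) whenever `β(b - a) < π`. -/
theorem statement13 (n : ℕ) (hn : 3 ≤ n) (a b : ℝ) (hab : a < b) (α β : ℝ) (hβ : 0 < β) :
    CondC2 n (fun s : ℝ => Real.exp (α * s) * Real.cos (β * s))
      (fun s : ℝ => Real.exp (α * s) * Real.sin (β * s)) a b ∧
    (β * (b - a) < Real.pi →
      CondC1 n (fun s : ℝ => Real.exp (α * s) * Real.cos (β * s))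
        (fun s : ℝ => Real.exp (α * s) * Real.sin (β * s)) a b) := by
  set l : ℂ := (α : ℂ) + β * Complex.I with hl
  have hlre : l.re = α := by simp [hl]
  have hlim : l.im = β := by simp [hl]
  constructor
  · -- C2
    intro ψ hψ s₁ hs₁ h1 h2 s hs
    obtain ⟨d, hd1, hd2⟩ := key n hn a b hab α β hψ
    have hs₁' : s₁ ∈ Set.Icc a b := Set.Ioo_subset_Icc_self hs₁
    rw [hd1 s₁ hs₁'] at h1
    rw [hd2 s₁ hs₁'] at h2
    have hre2 : (d * l * Complex.exp (l * s₁)).re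
        = α * (d * Complex.exp (l * s₁)).re - β * (d * Complex.exp (l * s₁)).im := by
      rw [show d * l * Complex.exp (l * s₁) = l * (d * Complex.exp (l * s₁)) by ring,
        Complex.mul_re, hlre, hlim]
    rw [hre2, h1] at h2
    have him : (d * Complex.exp (l * s₁)).im = 0 := by
      have hb : β * (d * Complex.exp (l * s₁)).im = 0 := by linarith
      rcases mul_eq_zero.mp hb with h | h
      · exact absurd h hβ.ne'
      · exact h
    have hw : d * Complex.exp (l * s₁) = 0 :=
      Complex.ext (by simpa using h1) (by simpa using him)
    have hd0 : d = 0 := by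
      rcases mul_eq_zero.mp hw with h | h
      · exact h
      · exact absurd h (Complex.exp_ne_zero _)
    rw [hd1 s hs, hd0]
    simp
  · -- C1
    intro hπ ψ hψ s₁ hs₁ s₂ hs₂ hne h1 h2 s hs
    obtain ⟨d, hd1, _⟩ := key n hn a b hab α β hψ
    rw [hd1 s₁ hs₁] at h1
    rw [hd1 s₂ hs₂] at h2
    have hd0 : d = 0 := by
      by_contra hd
      have hprod : d * Complex.exp (l * s₂)
          = (d * Complex.exp (l * s₁)) * Complex.exp (l * ((s₂ - s₁ : ℝ) : ℂ)) := by
        rw [mul_assoc, ← Complex.exp_add]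
        congr 2
        push_cast
        ring
      have hw1ne : d * Complex.exp (l * s₁) ≠ 0 :=
        mul_ne_zero hd (Complex.exp_ne_zero _)
      have him1 : (d * Complex.exp (l * s₁)).im ≠ 0 := by
        intro h
        exact hw1ne (Complex.ext (by simpa using h1) (by simpa using h))
      have hz : (Complex.exp (l * ((s₂ - s₁ : ℝ) : ℂ))).im = 0 := by
        rw [hprod, Complex.mul_re, h1] at h2
        simp only [zero_mul, zero_sub, neg_eq_zero] at h2
        rcases mul_eq_zero.mp h2 with h | h
        · exact absurd h him1
        · exact h
      have ht : Real.sin (β * (s₂ - s₁)) = 0 := by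
        rw [Complex.exp_im] at hz
        have h2' : (l * ((s₂ - s₁ : ℝ) : ℂ)).im = β * (s₂ - s₁) := by
          simp [hl, Complex.mul_im]
        rw [h2'] at hz
        rcases mul_eq_zero.mp hz with h | h
        · exact absurd h (Real.exp_ne_zero _)
        · exact h
      have habs : |β * (s₂ - s₁)| < Real.pi := by
        rw [abs_mul, abs_of_pos hβ]
        have h1' : |s₂ - s₁| ≤ b - a := by
          rw [abs_sub_le_iff]
          constructor <;> [linarith [hs₁.1, hs₂.2]; linarith [hs₁.2, hs₂.1]]
        calc β * |s₂ - s₁| ≤ β * (b - a) := by nlinarith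
          _ < Real.pi := hπ
      obtain ⟨hL, hR⟩ := abs_lt.mp habs
      have h0 := (Real.sin_eq_zero_iff_of_lt_of_lt hL hR).mp ht
      rcases mul_eq_zero.mp h0 with h | h
      · exact absurd h hβ.ne'
      · exact hne (by linarith)
    rw [hd1 s hs, hd0]
    simp
end
end

section
/- Let n ≥ 3 and let u, v ∈ C^n([a,b]) be such that dim P^n_{u,v}([a,b]) = n and condition (C2) holds. Then for every s₀ ∈ (a,b), the 2×2 determinant u^{(n-2)}(s₀) v^{(n-1)}(s₀) − u^{(n-1)}(s₀) v^{(n-2)}(s₀) is nonzero. -/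
open Set

noncomputable section

/-- If the `k`-th iterated derivative of `f` within `[a,b]` vanishes on `[a,b]`, then `f`
agrees on `[a,b]` with a polynomial of degree `< k`. -/
lemma poly_of_iter_zero (a b : ℝ) (hab : a < b) :
    ∀ (k : ℕ) (f : ℝ → ℝ), ContDiffOn ℝ k f (Set.Icc a b) →
      (∀ s ∈ Set.Icc a b, iteratedDerivWithin k f (Set.Icc a b) s = 0) →
      ∃ c : ℕ → ℝ, ∀ s ∈ Set.Icc a b, f s = ∑ i ∈ Finset.range k, c i * s ^ i := by
  intro k
  induction k with
  | zero =>
    intro f _ h0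
    exact ⟨fun _ => 0, fun s hs => by simpa using h0 s hs⟩
  | succ k IH =>
    intro f hf h0
    have hud : UniqueDiffOn ℝ (Set.Icc a b) := uniqueDiffOn_Icc hab
    set g := derivWithin f (Set.Icc a b) with hgdef
    have hgcd : ContDiffOn ℝ k g (Set.Icc a b) := by
      refine hf.derivWithin hud ?_
      exact_mod_cast le_refl (k + 1)
    have hg0 : ∀ s ∈ Set.Icc a b, iteratedDerivWithin k g (Set.Icc a b) s = 0 := by
      intro s hs
      rw [hgdef, ← iteratedDerivWithin_succ']
      exact h0 s hs
    obtain ⟨c, hc⟩ := IH g hgcd hg0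
    set F : ℝ → ℝ := fun s => ∑ i ∈ Finset.range k, c i / (i + 1) * s ^ (i + 1) with hFdef
    have hF : ∀ x : ℝ, HasDerivAt F (∑ i ∈ Finset.range k, c i * x ^ i) x := by
      intro x
      have h1 : HasDerivAt F
          (∑ i ∈ Finset.range k, c i / (i + 1) * (((i : ℝ) + 1) * x ^ i)) x := by
        refine HasDerivAt.fun_sum fun i _ => ?_
        have := (hasDerivAt_pow (i + 1) x).const_mul (c i / (i + 1))
        simpa using this
      convert h1 using 1
      refine Finset.sum_congr rfl fun i _ => ?_
      have hi : (i : ℝ) + 1 ≠ 0 := by positivity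
      field_simp
    have hfd : DifferentiableOn ℝ f (Set.Icc a b) := by
      refine hf.differentiableOn ?_
      simp
    have hFd : DifferentiableOn ℝ F (Set.Icc a b) :=
      fun x _ => (hF x).differentiableAt.differentiableWithinAt
    have hsub : DifferentiableOn ℝ (fun s => f s - F s) (Set.Icc a b) := hfd.sub hFd
    have hder0 : ∀ x ∈ Set.Ico a b, derivWithin (fun s => f s - F s) (Set.Icc a b) x = 0 := by
      intro x hx
      have hx' : x ∈ Set.Icc a b := Set.Ico_subset_Icc_self hx
      have hu : UniqueDiffWithinAt ℝ (Set.Icc a b) x := hud x hx'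
      rw [derivWithin_fun_sub (hfd x hx') (hFd x hx')]
      have hDF : derivWithin F (Set.Icc a b) x = ∑ i ∈ Finset.range k, c i * x ^ i :=
        ((hF x).hasDerivWithinAt).derivWithin hu
      rw [hDF, ← hgdef, hc x hx', sub_self]
    have hconst := constant_of_derivWithin_zero hsub hder0
    refine ⟨fun i => Nat.rec (f a - F a) (fun j _ => c j / (j + 1)) i, fun s hs => ?_⟩
    have hfs : f s - F s = f a - F a := hconst s hs
    rw [Finset.sum_range_succ']
    show f s = (∑ i ∈ Finset.range k, c i / (i + 1) * s ^ (i + 1)) + (f a - F a) * s ^ 0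
    rw [pow_zero, mul_one]
    have hFs : F s = ∑ i ∈ Finset.range k, c i / (i + 1) * s ^ (i + 1) := rfl
    linarith [hFs]

/-- If `dim P^n_{u,v}([a,b]) = n` and condition (C2) holds, then the
Wronskian-type determinant `u^(n-2)(s₀) v^(n-1)(s₀) − u^(n-1)(s₀) v^(n-2)(s₀)` is nonzero
at every interior point `s₀ ∈ (a,b)`. -/
theorem statement14 (n : ℕ) (hn : 3 ≤ n) (a b : ℝ) (hab : a < b) (u v : ℝ → ℝ)
    (hu : ContDiffOn ℝ n u (Set.Icc a b)) (hv : ContDiffOn ℝ n v (Set.Icc a b))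
    (hdim : dimP n u v a b = n) (hC2 : CondC2 n u v a b) :
    ∀ s₀ ∈ Set.Ioo a b,
      dW a b (n - 2) u s₀ * dW a b (n - 1) v s₀ -
        dW a b (n - 1) u s₀ * dW a b (n - 2) v s₀ ≠ 0 := by
  classical
  intro s₀ hs₀ hdet
  have hud : UniqueDiffOn ℝ (Set.Icc a b) := uniqueDiffOn_Icc hab
  have hs₀' : s₀ ∈ Set.Icc a b := Set.mem_Icc_of_Ioo hs₀
  set A := dW a b (n - 2) u s₀
  set B := dW a b (n - 1) u s₀
  set C := dW a b (n - 2) v s₀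
  set D := dW a b (n - 1) v s₀
  -- find a nontrivial kernel vector (α, β)
  obtain ⟨α, β, hne, e1, e2⟩ :
      ∃ α β : ℝ, ¬(α = 0 ∧ β = 0) ∧ α * A + β * C = 0 ∧ α * B + β * D = 0 := by
    by_cases hA : A = 0
    · by_cases hC : C = 0
      · by_cases hB : B = 0
        · by_cases hD : D = 0
          · exact ⟨1, 0, by simp, by rw [hA, hC]; ring, by rw [hB, hD]; ring⟩
          · exact ⟨D, -B, by simp [hD], by rw [hA, hC]; ring, by ring⟩
        · exact ⟨D, -B, by simp [hB], by rw [hA, hC]; ring, by ring⟩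
      · exact ⟨C, -A, by simp [hC], by ring, by
          have : A * D - B * C = 0 := hdet
          nlinarith [this]⟩
    · exact ⟨C, -A, fun h => hA (neg_eq_zero.mp h.2), by ring, by
        have : A * D - B * C = 0 := hdet
        nlinarith [this]⟩
  set ψ : ℝ → ℝ := α • u + β • v with hψdef
  have huG : u ∈ genSet n u v := Set.mem_insert _ _
  have hvG : v ∈ genSet n u v := Set.mem_insert_of_mem _ (Set.mem_insert _ _)
  have hψmem : ψ ∈ Pspace n u v := by
    exact Submodule.add_mem _
      (Submodule.smul_mem _ _ (Submodule.subset_span huG))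
      (Submodule.smul_mem _ _ (Submodule.subset_span hvG))
  -- linearity of `dW`
  have hdWlin : ∀ k : ℕ, k ≤ n → ∀ x ∈ Set.Icc a b,
      dW a b k ψ x = α * dW a b k u x + β * dW a b k v x := by
    intro k hk x hx
    have hu' : ContDiffOn ℝ k u (Set.Icc a b) := hu.of_le (by exact_mod_cast hk)
    have hv' : ContDiffOn ℝ k v (Set.Icc a b) := hv.of_le (by exact_mod_cast hk)
    have h1 : dW a b k ψ x = dW a b k (α • u) x + dW a b k (β • v) x :=
      iteratedDerivWithin_add hx hud ((hu'.const_smul α) x hx) ((hv'.const_smul β) x hx)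
    rw [h1]
    have h2 : dW a b k (α • u) x = α • dW a b k u x :=
      iteratedDerivWithin_const_smul hx hud α (hu' x hx)
    have h3 : dW a b k (β • v) x = β • dW a b k v x :=
      iteratedDerivWithin_const_smul hx hud β (hv' x hx)
    rw [h2, h3]; simp [smul_eq_mul]
  have hkn2 : n - 2 ≤ n := Nat.sub_le n 2
  have hkn1 : n - 1 ≤ n := Nat.sub_le n 1
  -- apply condition (C2)
  have hzero : ∀ s ∈ Set.Icc a b, dW a b (n - 2) ψ s = 0 := by
    refine hC2 ψ hψmem s₀ hs₀ ?_ ?_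
    · rw [hdWlin (n - 2) hkn2 s₀ hs₀']; exact e1
    · rw [hdWlin (n - 1) hkn1 s₀ hs₀']; exact e2
  -- ψ agrees with a polynomial of degree < n - 2 on [a, b]
  have hψcd : ContDiffOn ℝ (n - 2 : ℕ) ψ (Set.Icc a b) := by
    have h2 : ((n - 2 : ℕ) : WithTop ℕ∞) ≤ (n : WithTop ℕ∞) := by exact_mod_cast hkn2
    exact ((hu.of_le h2).const_smul α).add ((hv.of_le h2).const_smul β)
  obtain ⟨c, hc⟩ := poly_of_iter_zero a b hab (n - 2) ψ hψcd hzero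
  -- translate into the restricted space
  set R := restrictMap a b with hRdef
  set q : ℝ → ℝ := fun s => ∑ i ∈ Finset.range (n - 2), c i * s ^ i with hqdef
  have hRapp : ∀ (f : ℝ → ℝ) (x : Set.Icc a b), R f x = f x := fun _ _ => rfl
  have hRψq : R ψ = R q := by
    funext x
    rw [hRapp, hRapp]
    exact hc x x.2
  set M : Set (ℝ → ℝ) := {f : ℝ → ℝ | ∃ i : ℕ, i + 3 ≤ n ∧ f = fun s : ℝ => s ^ i} with hMdef
  have hgen : genSet n u v = insert u (insert v M) := rfl
  -- R q lies in the span of restricted monomials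
  have hq_mem : R q ∈ Submodule.span ℝ (R '' M) := by
    have hq_sum : q = ∑ i ∈ Finset.range (n - 2), c i • (fun s : ℝ => s ^ i) := by
      funext s
      simp [hqdef, Finset.sum_apply, smul_eq_mul]
    rw [hq_sum, map_sum]
    refine Submodule.sum_mem _ fun i hi => ?_
    rw [map_smul]
    refine Submodule.smul_mem _ _ (Submodule.subset_span ?_)
    refine ⟨fun s : ℝ => s ^ i, ⟨i, ?_, rfl⟩, rfl⟩
    have := Finset.mem_range.mp hi
    omega
  -- the monomial set as a finset
  set T0 : Finset (Set.Icc a b → ℝ) :=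
    (Finset.range (n - 2)).image (fun i => R (fun s : ℝ => s ^ i)) with hT0def
  have hMT0 : R '' M = (T0 : Set (Set.Icc a b → ℝ)) := by
    ext f
    simp only [hT0def, Finset.coe_image, Finset.coe_range, Set.mem_image, Set.mem_Iio, hMdef,
      Set.mem_setOf_eq]
    constructor
    · rintro ⟨g, ⟨i, hi, rfl⟩, rfl⟩
      exact ⟨i, by omega, rfl⟩
    · rintro ⟨i, hi, rfl⟩
      exact ⟨fun s : ℝ => s ^ i, ⟨i, by omega, rfl⟩, rfl⟩
  -- main contradiction machinery
  have key : ∀ w z : ℝ → ℝ, genSet n u v = insert w (insert z M) →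
      R w ∈ Submodule.span ℝ (insert (R z) (R '' M)) → False := by
    intro w z hwz hmem
    have hmap : (Pspace n u v).map R = Submodule.span ℝ (R '' genSet n u v) :=
      Submodule.map_span R _
    have himg : R '' genSet n u v = insert (R w) (insert (R z) (R '' M)) := by
      rw [hwz, Set.image_insert_eq, Set.image_insert_eq]
    have hspan : Submodule.span ℝ (R '' genSet n u v)
        = Submodule.span ℝ (insert (R z) (R '' M)) := by
      rw [himg, Submodule.span_insert_eq_span hmem]
    have hT : insert (R z) (R '' M) = ((insert (R z) T0 : Finset _) : Set _) := by
      rw [hMT0]; simp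
    have hle : Module.finrank ℝ (Submodule.span ℝ (insert (R z) (R '' M)))
        ≤ (insert (R z) T0 : Finset _).card := by
      rw [hT]
      exact finrank_span_finset_le_card _
    have hcard : (insert (R z) T0 : Finset _).card ≤ n - 1 := by
      calc (insert (R z) T0 : Finset _).card ≤ T0.card + 1 := Finset.card_insert_le _ _
        _ ≤ (n - 2) + 1 := by
            have h := Finset.card_image_le (s := Finset.range (n - 2))
              (f := fun i => R (fun s : ℝ => s ^ i))
            rw [← hT0def] at h
            simp only [Finset.card_range] at h
            omega
        _ ≤ n - 1 := by omega
    have : dimP n u v a b ≤ n - 1 := by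
      unfold dimP
      rw [← hRdef, hmap, hspan]
      exact le_trans hle hcard
    omega
  -- R ψ = α • R u + β • R v
  have hRψ : α • R u + β • R v = R q := by
    rw [← hRψq, hψdef]
    simp only [map_add, map_smul]
  by_cases hα : α = 0
  · have hβ : β ≠ 0 := fun h => hne ⟨hα, h⟩
    refine key v u ?_ ?_
    · rw [hgen, Set.insert_comm]
    · have h1 : β • R v = R q - α • R u := by rw [← hRψ]; abel
      have h2 : R v = β⁻¹ • (R q - α • R u) := by
        rw [← h1, inv_smul_smul₀ hβ]
      rw [h2]
      refine Submodule.smul_mem _ _ (Submodule.sub_mem _ ?_ ?_)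
      · exact Submodule.span_mono (Set.subset_insert _ _) hq_mem
      · exact Submodule.smul_mem _ _ (Submodule.subset_span (Set.mem_insert _ _))
  · refine key u v hgen ?_
    have h1 : α • R u = R q - β • R v := by rw [← hRψ]; abel
    have h2 : R u = α⁻¹ • (R q - β • R v) := by
      rw [← h1, inv_smul_smul₀ hα]
    rw [h2]
    refine Submodule.smul_mem _ _ (Submodule.sub_mem _ ?_ ?_)
    · exact Submodule.span_mono (Set.subset_insert _ _) hq_mem
    · exact Submodule.smul_mem _ _ (Submodule.subset_span (Set.mem_insert _ _))
end
end

section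
/- Let n ≥ 3 and let u, v ∈ C^n([a,b]) be such that dim P^n_{u,v}([a,b]) = n and conditions (C1) and (C2) hold. Then for every f ∈ C^n([a,b]) and every s₀ ∈ (a,b), there exists a unique Q ∈ P^n_{u,v}([a,b]) such that Q^{(k)}(s₀) = f^{(k)}(s₀) for all k = 0, 1, ..., n-1; moreover, for all s ∈ [a,b], |f(s) − Q(s)| ≤ (M/n!) |s − s₀|^n, where M = sup_{t ∈ [a,b]} |f^{(n)}(t) − Q^{(n)}(t)|. -/
open Set

noncomputable section

open MeasureTheory intervalIntegral in

lemma aux_taylor {a b s₀ : ℝ} (hs₀ : s₀ ∈ Set.Ioo a b) {n : ℕ} {g : ℝ → ℝ}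
    (hg : ContDiffOn ℝ n g (Set.Icc a b))
    (hder : ∀ k < n, iteratedDerivWithin k g (Set.Icc a b) s₀ = 0)
    {M : ℝ} (hM : ∀ t ∈ Set.Icc a b, |iteratedDerivWithin n g (Set.Icc a b) t| ≤ M) :
    ∀ s ∈ Set.Icc a b, |g s| ≤ M / n.factorial * |s - s₀| ^ n := by
  have hab : a < b := hs₀.1.trans hs₀.2
  have uniq : UniqueDiffOn ℝ (Set.Icc a b) := uniqueDiffOn_Icc hab
  have hs₀' : s₀ ∈ Set.Icc a b := Set.Ioo_subset_Icc_self hs₀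
  have hM0 : 0 ≤ M := le_trans (abs_nonneg _) (hM s₀ hs₀')
  have key : ∀ m : ℕ, ∀ k : ℕ, k + m = n → ∀ s ∈ Set.Icc a b,
      |iteratedDerivWithin k g (Set.Icc a b) s| ≤ M / m.factorial * |s - s₀| ^ m := by
    intro m
    induction m with
    | zero =>
      intro k hk s hs
      obtain rfl : k = n := by omega
      simpa using hM s hs
    | succ m ih =>
      intro k hk s hs
      have hk1 : (k + 1) + m = n := by omega
      have hkn : k < n := by omega
      have hcont : ContinuousOn (iteratedDerivWithin k g (Set.Icc a b)) (Set.Icc a b) :=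
        hg.continuousOn_iteratedDerivWithin (by exact_mod_cast hkn.le) uniq
      have hcont' : ContinuousOn (iteratedDerivWithin (k + 1) g (Set.Icc a b)) (Set.Icc a b) :=
        hg.continuousOn_iteratedDerivWithin (by exact_mod_cast (by omega : k + 1 ≤ n)) uniq
      have hdiff : DifferentiableOn ℝ (iteratedDerivWithin k g (Set.Icc a b)) (Set.Icc a b) :=
        hg.differentiableOn_iteratedDerivWithin (by exact_mod_cast hkn) uniq
      have hsub : Set.uIcc s₀ s ⊆ Set.Icc a b := Set.uIcc_subset_Icc hs₀' hs
      have hderivAt : ∀ x ∈ Set.Ioo (min s₀ s) (max s₀ s),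
          HasDerivAt (iteratedDerivWithin k g (Set.Icc a b))
            (iteratedDerivWithin (k + 1) g (Set.Icc a b) x) x := by
        intro x hx
        have hxI : x ∈ Set.Ioo a b :=
          ⟨lt_of_le_of_lt (le_min hs₀'.1 hs.1) hx.1, lt_of_lt_of_le hx.2 (max_le hs₀'.2 hs.2)⟩
        have hxIcc : x ∈ Set.Icc a b := Set.Ioo_subset_Icc_self hxI
        have h1 := (hdiff x hxIcc).hasDerivWithinAt
        have h2 := h1.hasDerivAt (Icc_mem_nhds hxI.1 hxI.2)
        rw [show iteratedDerivWithin (k + 1) g (Set.Icc a b) x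
            = derivWithin (iteratedDerivWithin k g (Set.Icc a b)) (Set.Icc a b) x from
          congrFun iteratedDerivWithin_succ x]
        exact h2
      have hint : IntervalIntegrable (iteratedDerivWithin (k + 1) g (Set.Icc a b)) volume s₀ s :=
        (hcont'.mono hsub).intervalIntegrable
      have hftc : ∫ t in s₀..s, iteratedDerivWithin (k + 1) g (Set.Icc a b) t
          = iteratedDerivWithin k g (Set.Icc a b) s - iteratedDerivWithin k g (Set.Icc a b) s₀ :=
        intervalIntegral.integral_eq_sub_of_hasDeriv_right (hcont.mono hsub)
          (fun x hx => (hderivAt x hx).hasDerivWithinAt) hint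
      have h0 : iteratedDerivWithin k g (Set.Icc a b) s₀ = 0 := hder k hkn
      have hboundcont : Continuous (fun t : ℝ => M / m.factorial * |t - s₀| ^ m) :=
        continuous_const.mul (((continuous_id.sub continuous_const).abs).pow m)
      have hae : ∀ᵐ t ∂volume.restrict (Set.uIoc s₀ s),
          ‖iteratedDerivWithin (k + 1) g (Set.Icc a b) t‖ ≤ M / m.factorial * |t - s₀| ^ m := by
        refine (ae_restrict_mem measurableSet_uIoc).mono fun t ht => ?_
        have htI : t ∈ Set.Icc a b := hsub (Set.uIoc_subset_uIcc ht)
        simpa [Real.norm_eq_abs] using ih (k + 1) hk1 t htI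
      have step1 : |iteratedDerivWithin k g (Set.Icc a b) s|
          ≤ |∫ t in s₀..s, M / m.factorial * |t - s₀| ^ m| := by
        have := intervalIntegral.norm_integral_le_abs_of_norm_le hae (hboundcont.intervalIntegrable _ _)
        rw [hftc, h0, sub_zero] at this
        simpa [Real.norm_eq_abs] using this
      have step2 : |∫ t in s₀..s, M / m.factorial * |t - s₀| ^ m|
          = M / m.factorial * (|s - s₀| ^ (m + 1) / (m + 1)) := by
        rw [intervalIntegral.integral_const_mul, abs_mul,
          abs_of_nonneg (div_nonneg hM0 (Nat.cast_nonneg _)),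
          intervalIntegral.abs_intervalIntegral_eq, integral_pow_abs_sub_uIoc,
          abs_of_nonneg (div_nonneg (pow_nonneg (abs_nonneg _) _) (by positivity))]
      have step3 : M / m.factorial * (|s - s₀| ^ (m + 1) / (m + 1))
          = M / (m + 1).factorial * |s - s₀| ^ (m + 1) := by
        have h2 : (((m + 1).factorial : ℕ) : ℝ) = ((m : ℝ) + 1) * (m.factorial : ℝ) := by
          push_cast [Nat.factorial_succ]; ring
        rw [h2, div_mul_div_comm, div_mul_eq_mul_div,
          mul_comm ((m.factorial : ℕ) : ℝ) ((m : ℝ) + 1)]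
      calc |iteratedDerivWithin k g (Set.Icc a b) s|
          ≤ |∫ t in s₀..s, M / m.factorial * |t - s₀| ^ m| := step1
        _ = M / (m + 1).factorial * |s - s₀| ^ (m + 1) := by rw [step2, step3]
  intro s hs
  have := key n 0 (by omega) s hs
  simpa [iteratedDerivWithin_zero] using this

/-- Under conditions (C1) and (C2) and `dim P^n_{u,v}([a,b]) = n`, for
every `f ∈ C^n([a,b])` and `s₀ ∈ (a,b)` there is a unique Hermite interpolant
`Q ∈ P^n_{u,v}([a,b])` with `Q^(k)(s₀) = f^(k)(s₀)` for `k = 0, ..., n-1`, and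
`|f(s) − Q(s)| ≤ (M/n!) |s − s₀|^n` on `[a,b]`, where
`M = sup_{t ∈ [a,b]} |f^(n)(t) − Q^(n)(t)|`. -/
theorem statement15 (n : ℕ) (hn : 3 ≤ n) (a b : ℝ) (hab : a < b) (u v : ℝ → ℝ)
    (hu : ContDiffOn ℝ n u (Set.Icc a b)) (hv : ContDiffOn ℝ n v (Set.Icc a b))
    (hdim : dimP n u v a b = n) (hC1 : CondC1 n u v a b) (hC2 : CondC2 n u v a b) :
    ∀ f : ℝ → ℝ, ContDiffOn ℝ n f (Set.Icc a b) → ∀ s₀ ∈ Set.Ioo a b,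
      ∃ Q ∈ Pspace n u v,
        (∀ k < n, dW a b k Q s₀ = dW a b k f s₀) ∧
        (∀ W ∈ Pspace n u v,
          (∀ k < n, dW a b k W s₀ = dW a b k f s₀) → Set.EqOn W Q (Set.Icc a b)) ∧
        (∀ s ∈ Set.Icc a b,
          |f s - Q s| ≤
            (sSup ((fun t => |dW a b n f t - dW a b n Q t|) '' Set.Icc a b) /
              Nat.factorial n) * |s - s₀| ^ n) := by
  classical
  intro f hf s₀ hs₀
  have uniq : UniqueDiffOn ℝ (Set.Icc a b) := uniqueDiffOn_Icc hab
  have hs₀' : s₀ ∈ Set.Icc a b := Set.Ioo_subset_Icc_self hs₀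
  -- the generating family
  set e : Fin n → (ℝ → ℝ) := fun i =>
    if (i : ℕ) + 3 ≤ n then (fun s : ℝ => s ^ (i : ℕ)) else
      if (i : ℕ) + 2 = n then u else v with he
  have heu : e ⟨n - 2, by omega⟩ = u := by
    simp only [he]
    rw [if_neg (by omega), if_pos (by omega)]
  have hev : e ⟨n - 1, by omega⟩ = v := by
    simp only [he]
    rw [if_neg (by omega), if_neg (by omega)]
  have hrange : genSet n u v = Set.range e := by
    ext g
    simp only [genSet, Set.mem_insert_iff, Set.mem_setOf_eq, Set.mem_range]
    constructor
    · rintro (rfl | rfl | ⟨i, hi, rfl⟩)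
      · exact ⟨⟨n - 2, by omega⟩, heu⟩
      · exact ⟨⟨n - 1, by omega⟩, hev⟩
      · exact ⟨⟨i, by omega⟩, by simp only [he]; rw [if_pos (by omega)]⟩
    · rintro ⟨i, rfl⟩
      by_cases h1 : (i : ℕ) + 3 ≤ n
      · right; right
        exact ⟨i, h1, by simp only [he]; rw [if_pos h1]⟩
      · by_cases h2 : (i : ℕ) + 2 = n
        · left; simp only [he]; rw [if_neg h1, if_pos h2]
        · right; left; simp only [he]; rw [if_neg h1, if_neg h2]
  have hPs : Pspace n u v = Submodule.span ℝ (Set.range e) := by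
    rw [Pspace, hrange]
  have heC : ∀ i, ContDiffOn ℝ n (e i) (Set.Icc a b) := by
    intro i
    simp only [he]
    split_ifs
    · exact (contDiff_id.pow _).contDiffOn
    · exact hu
    · exact hv
  have hsumC : ∀ c : Fin n → ℝ, ContDiffOn ℝ n (∑ i, c i • e i) (Set.Icc a b) := by
    intro c
    have hrw : (∑ i, c i • e i) = fun s => ∑ i, c i * e i s := by
      funext s; simp [Finset.sum_apply]
    rw [hrw]
    exact ContDiffOn.sum fun i _ => contDiffOn_const.mul (heC i)
  have hmemP : ∀ c : Fin n → ℝ, (∑ i, c i • e i) ∈ Pspace n u v := by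
    intro c
    rw [hPs]
    exact Submodule.sum_mem _ fun i _ =>
      Submodule.smul_mem _ _ (Submodule.subset_span (Set.mem_range_self i))
  have hPC : ∀ ψ ∈ Pspace n u v, ContDiffOn ℝ n ψ (Set.Icc a b) := by
    intro ψ hψ
    rw [hPs, Submodule.mem_span_range_iff_exists_fun] at hψ
    obtain ⟨c, hc⟩ := hψ
    rw [← hc]
    exact hsumC c
  -- key vanishing lemma
  have hkey : ∀ ψ ∈ Pspace n u v, (∀ k < n, dW a b k ψ s₀ = 0) →
      ∀ s ∈ Set.Icc a b, ψ s = 0 := by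
    intro ψ hψ hd
    have hψC := hPC ψ hψ
    have h2 : ∀ s ∈ Set.Icc a b, dW a b (n - 2) ψ s = 0 :=
      hC2 ψ hψ s₀ hs₀ (hd _ (by omega)) (hd _ (by omega))
    have hdown : ∀ j, j ≤ n - 2 → ∀ s ∈ Set.Icc a b, dW a b (n - 2 - j) ψ s = 0 := by
      intro j
      induction j with
      | zero => intro _; simpa using h2
      | succ j ih =>
        intro hj s hs
        have hprev : ∀ s ∈ Set.Icc a b, dW a b (n - 2 - j) ψ s = 0 := ih (by omega)
        have hk1 : (n - 2 - (j + 1)) + 1 = n - 2 - j := by omega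
        have hkn : n - 2 - (j + 1) < n := by omega
        have hdiff : DifferentiableOn ℝ (dW a b (n - 2 - (j + 1)) ψ) (Set.Icc a b) :=
          hψC.differentiableOn_iteratedDerivWithin (by exact_mod_cast hkn) uniq
        have hderiv : ∀ x ∈ Set.Ico a b,
            derivWithin (dW a b (n - 2 - (j + 1)) ψ) (Set.Icc a b) x = 0 := by
          intro x hx
          have hx' : x ∈ Set.Icc a b := Set.Ico_subset_Icc_self hx
          have := hprev x hx'
          rw [← hk1] at this
          simp only [dW] at this ⊢
          rw [← iteratedDerivWithin_succ]
          exact this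
        have hconst := constant_of_derivWithin_zero hdiff hderiv
        have h0 : dW a b (n - 2 - (j + 1)) ψ s₀ = 0 := hd _ (by omega)
        have := hconst s hs
        rw [this, ← hconst s₀ hs₀', h0]
    intro s hs
    have := hdown (n - 2) le_rfl s hs
    simpa [dW, Nat.sub_self, iteratedDerivWithin_zero] using this
  -- linear independence of the restrictions
  have hli : LinearIndependent ℝ (fun i => restrictMap a b (e i)) := by
    rw [linearIndependent_iff_card_eq_finrank_span]
    have h1 : Set.range (fun i => restrictMap a b (e i)) = (restrictMap a b) '' (Set.range e) := by
      rw [← Set.range_comp]; rfl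
    have h2 : Submodule.span ℝ ((restrictMap a b) '' (Set.range e))
        = (Pspace n u v).map (restrictMap a b) := by
      rw [Submodule.span_image, ← hPs]
    rw [Set.finrank, h1, h2]
    have : Module.finrank ℝ ((Pspace n u v).map (restrictMap a b)) = n := hdim
    rw [this, Fintype.card_fin]
  -- the linear evaluation map
  set T : (Fin n → ℝ) →ₗ[ℝ] (Fin n → ℝ) :=
    { toFun := fun c k => dW a b (k : ℕ) (∑ i, c i • e i) s₀
      map_add' := by
        intro c c'
        funext k
        have hsum : (∑ i : Fin n, (c i + c' i) • e i) = (∑ i, c i • e i) + (∑ i, c' i • e i) := by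
          simp [add_smul, Finset.sum_add_distrib]
        simp only [dW, Pi.add_apply]
        rw [hsum]
        exact iteratedDerivWithin_add hs₀' uniq
          (((hsumC c).of_le (by exact_mod_cast k.isLt.le)) s₀ hs₀')
          (((hsumC c').of_le (by exact_mod_cast k.isLt.le)) s₀ hs₀')
      map_smul' := by
        intro r c
        funext k
        have hsum : (∑ i : Fin n, (r * c i) • e i) = r • (∑ i, c i • e i) := by
          simp [mul_smul, Finset.smul_sum]
        simp only [dW, RingHom.id_apply, Pi.smul_apply, smul_eq_mul]
        rw [hsum]
        have := iteratedDerivWithin_const_smul (f := ∑ i, c i • e i) (n := (k : ℕ))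
          hs₀' uniq r (((hsumC c).of_le (by exact_mod_cast k.isLt.le)) s₀ hs₀')
        simpa using this } with hT
  have hTinj : Function.Injective T := by
    rw [← LinearMap.ker_eq_bot]
    rw [Submodule.eq_bot_iff]
    intro c hc
    have hc' : ∀ k : Fin n, dW a b (k : ℕ) (∑ i, c i • e i) s₀ = 0 := by
      intro k
      exact congrFun hc k
    have hd : ∀ k < n, dW a b k (∑ i, c i • e i) s₀ = 0 := fun k hk => hc' ⟨k, hk⟩
    have hzero : ∀ s ∈ Set.Icc a b, (∑ i, c i • e i) s = 0 := hkey _ (hmemP c) hd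
    have hres : ∑ i, c i • restrictMap a b (e i) = 0 := by
      have : restrictMap a b (∑ i, c i • e i) = ∑ i, c i • restrictMap a b (e i) := by
        rw [map_sum]
        simp
      rw [← this]
      funext x
      exact hzero x.val x.2
    funext i
    exact Fintype.linearIndependent_iff.mp hli c hres i
  have hTsurj : Function.Surjective T := LinearMap.injective_iff_surjective.mp hTinj
  obtain ⟨c, hc⟩ := hTsurj (fun k => dW a b (k : ℕ) f s₀)
  refine ⟨∑ i, c i • e i, hmemP c, ?_, ?_, ?_⟩
  · intro k hk
    exact congrFun hc ⟨k, hk⟩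
  · intro W hW hWd s hs
    have hQd : ∀ k < n, dW a b k (∑ i, c i • e i) s₀ = dW a b k f s₀ := fun k hk =>
      congrFun hc ⟨k, hk⟩
    have hsubm : (W - ∑ i, c i • e i) ∈ Pspace n u v :=
      Submodule.sub_mem _ hW (hmemP c)
    have hd : ∀ k < n, dW a b k (W - ∑ i, c i • e i) s₀ = 0 := by
      intro k hk
      simp only [dW]
      rw [iteratedDerivWithin_sub hs₀' uniq
        (((hPC W hW).of_le (by exact_mod_cast hk.le)) s₀ hs₀')
        (((hsumC c).of_le (by exact_mod_cast hk.le)) s₀ hs₀')]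
      have h1 := hWd k hk
      have h2 := hQd k hk
      simp only [dW] at h1 h2
      rw [h1, h2, sub_self]
    have := hkey _ hsubm hd s hs
    simpa [sub_eq_zero] using this
  · -- error bound
    have hQd : ∀ k < n, dW a b k (∑ i, c i • e i) s₀ = dW a b k f s₀ := fun k hk =>
      congrFun hc ⟨k, hk⟩
    have hQC := hsumC c
    have hgC : ContDiffOn ℝ n (f - ∑ i, c i • e i) (Set.Icc a b) := hf.sub hQC
    set M := sSup ((fun t => |dW a b n f t - dW a b n (∑ i, c i • e i) t|) '' Set.Icc a b)
      with hM
    have hcontabs : ContinuousOn (fun t => |dW a b n f t - dW a b n (∑ i, c i • e i) t|)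
        (Set.Icc a b) := by
      apply ContinuousOn.abs
      exact (hf.continuousOn_iteratedDerivWithin le_rfl uniq).sub
        (hQC.continuousOn_iteratedDerivWithin le_rfl uniq)
    have hbdd : BddAbove ((fun t => |dW a b n f t - dW a b n (∑ i, c i • e i) t|) '' Set.Icc a b) :=
      (isCompact_Icc.image_of_continuousOn hcontabs).bddAbove
    have hMb : ∀ t ∈ Set.Icc a b,
        |iteratedDerivWithin n (f - ∑ i, c i • e i) (Set.Icc a b) t| ≤ M := by
      intro t ht
      have heq : iteratedDerivWithin n (f - ∑ i, c i • e i) (Set.Icc a b) t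
          = dW a b n f t - dW a b n (∑ i, c i • e i) t :=
        iteratedDerivWithin_sub ht uniq (hf t ht) (hQC t ht)
      rw [heq]
      exact le_csSup hbdd ⟨t, ht, rfl⟩
    have hd0 : ∀ k < n, iteratedDerivWithin k (f - ∑ i, c i • e i) (Set.Icc a b) s₀ = 0 := by
      intro k hk
      rw [iteratedDerivWithin_sub hs₀' uniq
        (((hf).of_le (by exact_mod_cast hk.le)) s₀ hs₀')
        (((hsumC c).of_le (by exact_mod_cast hk.le)) s₀ hs₀')]
      have := hQd k hk
      simp only [dW] at this
      rw [this, sub_self]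
    intro s hs
    have := aux_taylor hs₀ hgC hd0 hMb s hs
    simpa [Pi.sub_apply] using this
end
end
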